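/- arXiv:2005.08898 — 9 statements merged into one kernel-verified Lean document; each statement's English description precedes it below -/
import Mathlib

section
/- For vectors u, u_star in R^n with u ≠ 0, and any scalar λ ≥ ‖u_star‖₂/‖u‖₂, it holds that ‖(min(1,λ))·u − u_star‖₂ ≤ ‖u − u_star‖₂. -/
theorem euclidean_clip_nonexpansive {n : ℕ} (u ustar : EuclideanSpace ℝ (Fin n))
    (hu : u ≠ 0) (lam : ℝ) (hlam : ‖ustar‖ / ‖u‖ ≤ lam) :
    ‖(min 1 lam) • u - ustar‖ ≤ ‖u - ustar‖ := by
  rcases le_or_gt 1 lam with h | h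
  · simp [min_eq_left h]
  · have hupos : 0 < ‖u‖ := norm_pos_iff.mpr hu
    have ht : min 1 lam = lam := min_eq_right h.le
    rw [ht]
    have hlam' : ‖ustar‖ ≤ lam * ‖u‖ := (div_le_iff₀ hupos).mp hlam
    have hlam0 : 0 ≤ lam := le_trans (div_nonneg (norm_nonneg _) (norm_nonneg _)) hlam
    have hinner : (inner ℝ u ustar : ℝ) ≤ ‖u‖ * ‖ustar‖ := real_inner_le_norm u ustar
    have hsq : ‖lam • u - ustar‖ ^ 2 ≤ ‖u - ustar‖ ^ 2 := by
      rw [norm_sub_sq_real, norm_sub_sq_real, real_inner_smul_left, norm_smul,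
        Real.norm_eq_abs, abs_of_nonneg hlam0]
      have h2 : (inner ℝ u ustar : ℝ) ≤ lam * ‖u‖ ^ 2 := by
        calc (inner ℝ u ustar : ℝ) ≤ ‖u‖ * ‖ustar‖ := hinner
        _ ≤ ‖u‖ * (lam * ‖u‖) := by
          exact mul_le_mul_of_nonneg_left hlam' (norm_nonneg u)
        _ = lam * ‖u‖ ^ 2 := by ring
      nlinarith [mul_nonneg (sub_nonneg.2 h.le) (sub_nonneg.2 h2),
        mul_nonneg (mul_nonneg (sub_nonneg.2 h.le) (sub_nonneg.2 h.le)) (sq_nonneg ‖u‖)]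
    have := Real.sqrt_le_sqrt hsq
    rwa [Real.sqrt_sq (norm_nonneg _), Real.sqrt_sq (norm_nonneg _)] at this
end

section
/- For any real n₁×n₂ matrix X and any integer r with 1 ≤ r ≤ min(n₁,n₂), the partial Frobenius norm ‖X‖_{F,r} := sqrt(Σ_{i=1}^r σ_i(X)²) equals the maximum of |⟨X, Y⟩| over all n₁×n₂ matrices Y with ‖Y‖_F ≤ 1 and rank(Y) ≤ r, where ⟨X,Y⟩ = trace(X^T Y). -/
open Matrix

/-- Frobenius norm of a real matrix. -/
noncomputable def frob {n₁ n₂ : ℕ} (A : Matrix (Fin n₁) (Fin n₂) ℝ) : ℝ :=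
  Real.sqrt (∑ i, ∑ j, (A i j) ^ 2)

/-- `IsSVD X U σ V` says that `X = U * diag σ * Vᵀ` is a singular value decomposition of `X`:
`U` and `V` have orthonormal columns and the singular values `σ` are nonnegative and sorted
in nonincreasing order. -/
def IsSVD {n₁ n₂ k : ℕ} (X : Matrix (Fin n₁) (Fin n₂) ℝ)
    (U : Matrix (Fin n₁) (Fin k) ℝ) (σ : Fin k → ℝ) (V : Matrix (Fin n₂) (Fin k) ℝ) : Prop :=
  X = U * Matrix.diagonal σ * Vᵀ ∧ Uᵀ * U = 1 ∧ Vᵀ * V = 1 ∧ Antitone σ ∧ ∀ i, 0 ≤ σ i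

section Aux

open Finset

lemma key_trace {n₁ n₂ k : ℕ} (U : Matrix (Fin n₁) (Fin k) ℝ) (V : Matrix (Fin n₂) (Fin k) ℝ)
    (hU : Uᵀ * U = 1) (hV : Vᵀ * V = 1) (a b : Fin k → ℝ) :
    Matrix.trace ((U * Matrix.diagonal a * Vᵀ)ᵀ * (U * Matrix.diagonal b * Vᵀ)) = ∑ i, a i * b i := by
  have h1 : (U * Matrix.diagonal a * Vᵀ)ᵀ * (U * Matrix.diagonal b * Vᵀ)
      = V * (Matrix.diagonal a * (Uᵀ * U) * Matrix.diagonal b) * Vᵀ := by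
    simp [Matrix.transpose_mul, Matrix.diagonal_transpose, Matrix.mul_assoc]
  rw [h1, hU, Matrix.mul_one, Matrix.diagonal_mul_diagonal, Matrix.trace_mul_comm,
    ← Matrix.mul_assoc, hV, Matrix.one_mul]
  simp [Matrix.trace, Matrix.diag]

lemma trace_eq_sum {n₁ n₂ : ℕ} (A B : Matrix (Fin n₁) (Fin n₂) ℝ) :
    Matrix.trace (Aᵀ * B) = ∑ i, ∑ j, A i j * B i j := by
  rw [Finset.sum_comm]
  simp [Matrix.trace, Matrix.diag, Matrix.mul_apply, Matrix.transpose_apply]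

lemma exists_E {n₁ n₂ r : ℕ} (Y : Matrix (Fin n₁) (Fin n₂) ℝ) (hY : Y.rank ≤ r) :
    ∃ (d : ℕ) (_ : d ≤ r) (E : Matrix (Fin n₁) (Fin d) ℝ),
      Eᵀ * E = 1 ∧ E * (Eᵀ * Y) = Y := by
  set W : Submodule ℝ (EuclideanSpace ℝ (Fin n₁)) := Submodule.span ℝ (Set.range (fun j => WithLp.toLp 2 (Yᵀ j))) with hW
  have hrank : Y.rank = Module.finrank ℝ W := by
    rw [Matrix.rank_eq_finrank_span_cols, ← LinearEquiv.finrank_map_eq (WithLp.linearEquiv 2 ℝ (Fin n₁ → ℝ)).symm, Submodule.map_span, ← Set.range_comp]; rfl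
  set d := Module.finrank ℝ W with hd
  have b : OrthonormalBasis (Fin d) ℝ W := stdOrthonormalBasis ℝ W
  refine ⟨d, by omega, Matrix.of fun i j => ((b j : W) : EuclideanSpace ℝ (Fin n₁)) i, ?_, ?_⟩
  · ext j j'
    have h := orthonormal_iff_ite.mp b.orthonormal j j'
    rw [Submodule.coe_inner] at h
    simp only [PiLp.inner_apply, RCLike.inner_apply, starRingEnd_apply, star_trivial] at h
    simp [Matrix.mul_apply, Matrix.one_apply, h]
    rw [← h]; exact Finset.sum_congr rfl fun _ _ => mul_comm _ _
  · ext i j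
    have hcol : WithLp.toLp 2 (fun i => Y i j) ∈ W := Submodule.subset_span ⟨j, rfl⟩
    set x : W := ⟨WithLp.toLp 2 (fun i => Y i j), hcol⟩ with hx
    have hrepr := b.sum_repr x
    have hco : ∀ m, b.repr x m = ∑ l, ((b m : W) : EuclideanSpace ℝ (Fin n₁)) l * Y l j := by
      intro m
      rw [b.repr_apply_apply, Submodule.coe_inner]
      simp [PiLp.inner_apply, hx]
      exact Finset.sum_congr rfl fun _ _ => mul_comm _ _
    have h2 := congrArg (fun z : W => ((z : EuclideanSpace ℝ (Fin n₁)) i)) hrepr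
    simp only [Submodule.coe_sum, Submodule.coe_smul] at h2
    simp only [WithLp.ofLp_sum, Finset.sum_apply, WithLp.ofLp_smul, Pi.smul_apply, smul_eq_mul] at h2
    simp only [hco] at h2
    simp only [hx, WithLp.ofLp_toLp] at h2
    rw [Matrix.mul_apply, ← h2]
    apply Finset.sum_congr rfl
    intro m _
    rw [Matrix.mul_apply]
    simp [Matrix.transpose_apply, mul_comm]

lemma mulVec_norm_eq {n k : ℕ} (V : Matrix (Fin n) (Fin k) ℝ) (h : Vᵀ * V = 1) (g : Fin k → ℝ) :
    (V *ᵥ g) ⬝ᵥ (V *ᵥ g) = g ⬝ᵥ g := by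
  rw [dotProduct_mulVec, Matrix.vecMul_mulVec, h, Matrix.vecMul_one]

lemma norm_mulVec {n k : ℕ} (V : Matrix (Fin n) (Fin k) ℝ) (h : Vᵀ * V = 1) (g : Fin k → ℝ) :
    ∑ j, (∑ i, V j i * g i) ^ 2 = ∑ i, (g i) ^ 2 := by
  have h1 : ∀ j, (∑ i, V j i * g i) = (V *ᵥ g) j := by
    intro j; simp [Matrix.mulVec, dotProduct]
  simp_rw [h1, sq]
  exact mulVec_norm_eq V h g

lemma contraction {n k : ℕ} (E : Matrix (Fin n) (Fin k) ℝ) (h : Eᵀ * E = 1) (v : Fin n → ℝ) :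
    ∑ m, (∑ l, E l m * v l) ^ 2 ≤ ∑ l, (v l) ^ 2 := by
  set c : Fin k → ℝ := Eᵀ *ᵥ v with hc
  have h1 : ∀ m, (∑ l, E l m * v l) = c m := by
    intro m; simp [hc, Matrix.mulVec, dotProduct, Matrix.transpose_apply, mul_comm]
  simp_rw [h1, sq]
  set w : Fin n → ℝ := E *ᵥ c with hw
  have h2 : v ⬝ᵥ w = c ⬝ᵥ c := by
    rw [hw, dotProduct_mulVec, ← Matrix.mulVec_transpose, ← hc]
  have h3 : w ⬝ᵥ w = c ⬝ᵥ c := mulVec_norm_eq E h c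
  have h4 : 0 ≤ (v - w) ⬝ᵥ (v - w) := by
    unfold dotProduct
    exact Finset.sum_nonneg fun i _ => mul_self_nonneg _
  have h5 : (v - w) ⬝ᵥ (v - w) = v ⬝ᵥ v - 2 * (c ⬝ᵥ c) + c ⬝ᵥ c := by
    rw [sub_dotProduct, dotProduct_sub, dotProduct_sub,
      dotProduct_comm w v, h2, h3]
    ring
  rw [h5] at h4
  have : c ⬝ᵥ c ≤ v ⬝ᵥ v := by linarith
  simpa [dotProduct, sq] using this

lemma cs_abs {n₁ n₂ : ℕ} (A B : Matrix (Fin n₁) (Fin n₂) ℝ) :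
    |∑ i, ∑ j, A i j * B i j| ≤
      Real.sqrt (∑ i, ∑ j, (A i j) ^ 2) * Real.sqrt (∑ i, ∑ j, (B i j) ^ 2) := by
  have h := sum_mul_sq_le_sq_mul_sq Finset.univ
    (fun p : Fin n₁ × Fin n₂ => A p.1 p.2) (fun p : Fin n₁ × Fin n₂ => B p.1 p.2)
  simp only [Fintype.sum_prod_type] at h
  calc |∑ i, ∑ j, A i j * B i j| = Real.sqrt ((∑ i, ∑ j, A i j * B i j) ^ 2) :=
        (Real.sqrt_sq_eq_abs _).symm
    _ ≤ Real.sqrt ((∑ i, ∑ j, (A i j) ^ 2) * ∑ i, ∑ j, (B i j) ^ 2) := Real.sqrt_le_sqrt h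
    _ = _ := Real.sqrt_mul (by positivity) _

lemma sum_castLE {k r : ℕ} (hr : r ≤ k) (f : Fin k → ℝ) :
    ∑ i : Fin r, f (Fin.castLE hr i) = ∑ i : Fin k, if (i : ℕ) < r then f i else 0 := by
  set F : ℕ → ℝ := fun j => if h : j < k then f ⟨j, h⟩ else 0 with hF
  have h1 : ∑ i : Fin r, f (Fin.castLE hr i) = ∑ j ∈ range r, F j := by
    rw [← Fin.sum_univ_eq_sum_range]
    refine Finset.sum_congr rfl fun i _ => ?_
    rw [hF]
    simp only [dif_pos (lt_of_lt_of_le i.isLt hr)]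
    exact congrArg f (Fin.ext rfl)
  have h2 : ∑ i : Fin k, (if (i : ℕ) < r then f i else 0) =
      ∑ j ∈ range k, (if j < r then F j else 0) := by
    rw [← Fin.sum_univ_eq_sum_range]
    refine Finset.sum_congr rfl fun i _ => ?_
    by_cases h : (i : ℕ) < r
    · simp [h, hF, dif_pos i.isLt]
    · simp [h]
  rw [h1, h2, ← Finset.sum_filter]
  congr 1
  ext j
  simp only [Finset.mem_filter, Finset.mem_range]
  omega

lemma comb_nat' {k r : ℕ} (hr1 : 1 ≤ r) (hr : r ≤ k) (A T : ℕ → ℝ)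
    (hA : ∀ i j, i ≤ j → j < k → A j ≤ A i) (hA0 : ∀ i, i < k → 0 ≤ A i)
    (hT0 : ∀ i, i < k → 0 ≤ T i) (hT1 : ∀ i, i < k → T i ≤ 1)
    (hts : ∑ i ∈ range k, T i ≤ r) :
    ∑ i ∈ range k, A i * T i ≤ ∑ i ∈ range r, A i := by
  set c : ℝ := A (r - 1) with hc
  have hrk : r - 1 < k := lt_of_lt_of_le (Nat.sub_lt hr1 one_pos) hr
  have hsub : range r ⊆ range k := Finset.range_subset_range.2 hr
  have hsplit := (Finset.sum_sdiff (f := fun i => A i * T i) hsub).symm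
  have hsplitT := (Finset.sum_sdiff (f := T) hsub).symm
  have htail : ∑ i ∈ range k \ range r, A i * T i ≤ ∑ i ∈ range k \ range r, c * T i := by
    apply Finset.sum_le_sum
    intro i hi
    simp only [Finset.mem_sdiff, Finset.mem_range] at hi
    have h1 : A i ≤ c := hA (r - 1) i (by omega) hi.1
    have := hT0 i hi.1
    nlinarith
  have hc0 : 0 ≤ c := hA0 _ hrk
  have h2 : ∑ i ∈ range k \ range r, c * T i ≤ c * ∑ i ∈ range r, (1 - T i) := by
    rw [← Finset.mul_sum]
    apply mul_le_mul_of_nonneg_left _ hc0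
    have : ∑ i ∈ range r, (1 - T i) = r - ∑ i ∈ range r, T i := by
      rw [Finset.sum_sub_distrib]
      simp
    rw [this]
    linarith
  have h3 : ∑ i ∈ range r, A i * T i + c * ∑ i ∈ range r, (1 - T i) ≤ ∑ i ∈ range r, A i := by
    rw [Finset.mul_sum, ← Finset.sum_add_distrib]
    apply Finset.sum_le_sum
    intro i hi
    simp only [Finset.mem_range] at hi
    have hik : i < k := lt_of_lt_of_le hi hr
    have h1 : c ≤ A i := hA i (r - 1) (by omega) hrk
    have := hT1 i hik
    have := hT0 i hik
    nlinarith
  linarith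

lemma comb {k r : ℕ} (hr1 : 1 ≤ r) (hr : r ≤ k) (a t : Fin k → ℝ)
    (ha : Antitone a) (ha0 : ∀ i, 0 ≤ a i) (ht0 : ∀ i, 0 ≤ t i) (ht1 : ∀ i, t i ≤ 1)
    (hts : ∑ i, t i ≤ r) :
    ∑ i, a i * t i ≤ ∑ i : Fin r, a (Fin.castLE hr i) := by
  set A : ℕ → ℝ := fun j => if h : j < k then a ⟨j, h⟩ else 0 with hA
  set T : ℕ → ℝ := fun j => if h : j < k then t ⟨j, h⟩ else 0 with hT
  have e1 : ∑ i, a i * t i = ∑ j ∈ range k, A j * T j := by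
    rw [← Fin.sum_univ_eq_sum_range (fun j => A j * T j)]
    refine Finset.sum_congr rfl fun i _ => ?_
    simp [hA, hT, dif_pos i.isLt]
  have e2 : ∑ i : Fin r, a (Fin.castLE hr i) = ∑ j ∈ range r, A j := by
    rw [← Fin.sum_univ_eq_sum_range]
    refine Finset.sum_congr rfl fun i _ => ?_
    simp only [hA, dif_pos (lt_of_lt_of_le i.isLt hr)]
    exact congrArg a (Fin.ext rfl)
  have e3 : ∑ j ∈ range k, T j = ∑ i, t i := by
    rw [← Fin.sum_univ_eq_sum_range]
    refine Finset.sum_congr rfl fun i _ => ?_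
    simp [hT, dif_pos i.isLt]
  rw [e1, e2]
  refine comb_nat' hr1 hr A T ?_ ?_ ?_ ?_ (by rw [e3]; exact hts)
  · intro i j hij hjk
    simp only [hA, dif_pos hjk, dif_pos (lt_of_le_of_lt hij hjk)]
    exact ha (by exact_mod_cast hij : (⟨i, _⟩ : Fin k) ≤ ⟨j, hjk⟩)
  · intro i hik; simp only [hA, dif_pos hik]; exact ha0 _
  · intro i hik; simp only [hT, dif_pos hik]; exact ht0 _
  · intro i hik; simp only [hT, dif_pos hik]; exact ht1 _

end Aux

/-- The partial Frobenius norm `‖X‖_{F,r} = sqrt(∑_{i=1}^r σ_i(X)²)` is the maximum of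
`|⟨X, Y⟩|` over all matrices `Y` with `‖Y‖_F ≤ 1` and `rank Y ≤ r`, where the inner
product is `⟨X,Y⟩ = trace(Xᵀ Y)`. -/
theorem partialFro_eq_max_inner {n₁ n₂ r : ℕ}
    (X : Matrix (Fin n₁) (Fin n₂) ℝ)
    (U : Matrix (Fin n₁) (Fin (min n₁ n₂)) ℝ) (σ : Fin (min n₁ n₂) → ℝ)
    (V : Matrix (Fin n₂) (Fin (min n₁ n₂)) ℝ)
    (hSVD : IsSVD X U σ V) (hr1 : 1 ≤ r) (hr : r ≤ min n₁ n₂) :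
    IsGreatest {c : ℝ | ∃ Y : Matrix (Fin n₁) (Fin n₂) ℝ,
        frob Y ≤ 1 ∧ Y.rank ≤ r ∧ c = |Matrix.trace (Xᵀ * Y)|}
      (Real.sqrt (∑ i : Fin r, (σ (Fin.castLE hr i)) ^ 2)) := by
  obtain ⟨hX, hU, hV, hanti, hpos⟩ := hSVD
  set Ssum : ℝ := ∑ i : Fin r, (σ (Fin.castLE hr i)) ^ 2 with hSsum
  have hS0 : 0 ≤ Ssum := Finset.sum_nonneg fun i _ => sq_nonneg _
  set s : ℝ := Real.sqrt Ssum with hs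
  constructor
  · -- membership
    by_cases hz : Ssum = 0
    · refine ⟨0, ?_, ?_, ?_⟩
      · simp [frob]
      · simp [Matrix.rank_zero]
      · rw [hs, hz, Real.sqrt_zero]
        simp
    · have hSpos : 0 < Ssum := lt_of_le_of_ne hS0 (Ne.symm hz)
      have hspos : 0 < s := Real.sqrt_pos.2 hSpos
      have hss : s * s = Ssum := Real.mul_self_sqrt hS0
      set σ' : Fin (min n₁ n₂) → ℝ := fun i => if (i : ℕ) < r then σ i / s else 0 with hσ'
      refine ⟨U * Matrix.diagonal σ' * Vᵀ, ?_, ?_, ?_⟩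
      · -- frob ≤ 1
        have h1 : ∑ i, ∑ j, ((U * Matrix.diagonal σ' * Vᵀ) i j) ^ 2
            = ∑ i, σ' i * σ' i := by
          simp_rw [sq]
          rw [← trace_eq_sum, key_trace U V hU hV]
        have h2 : ∑ i, σ' i * σ' i = Ssum / (s * s) := by
          have : ∀ i : Fin (min n₁ n₂), σ' i * σ' i = if (i : ℕ) < r then (σ i ^ 2) / (s * s) else 0 := by
            intro i
            by_cases h : (i : ℕ) < r <;> simp [hσ', h] <;> ring
          simp_rw [this]
          rw [← sum_castLE hr (fun i => (σ i ^ 2) / (s * s)), ← Finset.sum_div, ← hSsum]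
        rw [frob, h1, h2, hss, div_self (ne_of_gt hSpos), Real.sqrt_one]
      · -- rank ≤ r
        calc (U * Matrix.diagonal σ' * Vᵀ).rank
            ≤ (U * Matrix.diagonal σ').rank := Matrix.rank_mul_le_left _ _
          _ ≤ (Matrix.diagonal σ').rank := Matrix.rank_mul_le_right _ _
          _ = Fintype.card {i // σ' i ≠ 0} := Matrix.rank_diagonal σ'
          _ ≤ r := by
              have : Fintype.card {i // σ' i ≠ 0} ≤ Fintype.card (Fin r) := by
                apply Fintype.card_le_of_injective
                  (fun x => ⟨(x.1 : ℕ), by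
                    by_contra hcon
                    exact x.2 (by simp [hσ', fun h => hcon h])⟩)
                intro a b hab
                exact Subtype.ext (Fin.ext (by simpa using congrArg Fin.val hab))
              simpa using this
      · -- value
        rw [hX, key_trace U V hU hV]
        have h2 : ∑ i, σ i * σ' i = Ssum / s := by
          have : ∀ i : Fin (min n₁ n₂), σ i * σ' i = if (i : ℕ) < r then (σ i ^ 2) / s else 0 := by
            intro i
            by_cases h : (i : ℕ) < r <;> simp [hσ', h] <;> ring
          simp_rw [this]
          rw [← sum_castLE hr (fun i => (σ i ^ 2) / s), ← Finset.sum_div, ← hSsum]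
        rw [h2]
        rw [abs_of_nonneg (by positivity)]
        rw [eq_div_iff (ne_of_gt hspos), hss]
  · -- upper bound
    rintro c ⟨Y, hfrob, hrank, rfl⟩
    obtain ⟨d, hdr, E, hE, hEY⟩ := exists_E Y hrank
    set Z : Matrix (Fin n₁) (Fin n₂) ℝ := E * (Eᵀ * X) with hZdef
    have hZ : Xᵀ * Y = Zᵀ * Y := by
      conv_lhs => rw [← hEY]
      simp [hZdef, Matrix.transpose_mul, Matrix.mul_assoc]
    set G : Matrix (Fin d) (Fin (min n₁ n₂)) ℝ := Eᵀ * U with hG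
    set t : Fin (min n₁ n₂) → ℝ := fun i => ∑ m, (G m i) ^ 2 with ht
    have hZsum : ∑ i, ∑ j, (Z i j) ^ 2 = ∑ i, (σ i) ^ 2 * t i := by
      set M : Matrix (Fin d) (Fin n₂) ℝ := Eᵀ * X with hM
      have step1 : ∑ i, ∑ j, (Z i j) ^ 2 = ∑ m, ∑ j, (M m j) ^ 2 := by
        rw [Finset.sum_comm]
        have : ∀ j, ∑ i, (Z i j) ^ 2 = ∑ m, (M m j) ^ 2 := by
          intro j
          have := norm_mulVec E hE (fun m => M m j)
          rw [← this]
          apply Finset.sum_congr rfl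
          intro i _
          have hzz : Z i j = ∑ m, E i m * M m j := by
            simp only [hZdef, Matrix.mul_apply]
          rw [hzz]
        simp_rw [this]
        exact Finset.sum_comm
      have step2 : ∀ m, ∑ j, (M m j) ^ 2 = ∑ i, (G m i * σ i) ^ 2 := by
        intro m
        have h0 := norm_mulVec V hV (fun i => G m i * σ i)
        rw [← h0]
        apply Finset.sum_congr rfl
        intro j _
        congr 1
        rw [hM, hX, show Eᵀ * (U * Matrix.diagonal σ * Vᵀ) = ((Eᵀ * U) * Matrix.diagonal σ) * Vᵀ by
          simp [Matrix.mul_assoc], Matrix.mul_apply]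
        apply Finset.sum_congr rfl
        intro i _
        rw [Matrix.mul_diagonal, Matrix.transpose_apply, ← hG]
        ring
      rw [step1]
      simp_rw [step2]
      rw [Finset.sum_comm]
      apply Finset.sum_congr rfl
      intro i _
      rw [ht, Finset.mul_sum]
      apply Finset.sum_congr rfl
      intro m _
      ring
    have ht0 : ∀ i, 0 ≤ t i := fun i => Finset.sum_nonneg fun m _ => sq_nonneg _
    have ht1 : ∀ i, t i ≤ 1 := by
      intro i
      have h0 := contraction E hE (fun l => U l i)
      have hL : ∑ m, (G m i) ^ 2 = ∑ m, (∑ l, E l m * U l i) ^ 2 := by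
        apply Finset.sum_congr rfl
        intro m _
        congr 1
        all_goals simp only [hG, Matrix.mul_apply, Matrix.transpose_apply]
      have hR : ∑ l, (U l i) ^ 2 = 1 := by
        have : (Uᵀ * U) i i = (1 : ℝ) := by rw [hU]; simp [Matrix.one_apply]
        rw [Matrix.mul_apply] at this
        simp only [Matrix.transpose_apply] at this
        rw [← this]
        apply Finset.sum_congr rfl
        intro l _
        ring
      simp only [ht]
      rw [hL, ← hR]
      exact h0
    have hts : ∑ i, t i ≤ (r : ℝ) := by
      have hsum : ∑ i, t i = ∑ m, ∑ i, (G m i) ^ 2 := by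
        simp only [ht]
        rw [Finset.sum_comm]
      have hbound : ∀ m, ∑ i, (G m i) ^ 2 ≤ 1 := by
        intro m
        have h0 := contraction U hU (fun l => E l m)
        have hL : ∑ i, (G m i) ^ 2 = ∑ i, (∑ l, U l i * E l m) ^ 2 := by
          apply Finset.sum_congr rfl
          intro i _
          congr 1
          all_goals
            simp only [hG, Matrix.mul_apply, Matrix.transpose_apply]
            exact Finset.sum_congr rfl fun l _ => mul_comm _ _
        have hR : ∑ l, (E l m) ^ 2 = 1 := by
          have : (Eᵀ * E) m m = (1 : ℝ) := by rw [hE]; simp [Matrix.one_apply]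
          rw [Matrix.mul_apply] at this
          simp only [Matrix.transpose_apply] at this
          rw [← this]
          apply Finset.sum_congr rfl
          intro l _
          ring
        rw [hL, ← hR]
        exact h0
      calc ∑ i, t i = ∑ m, ∑ i, (G m i) ^ 2 := hsum
        _ ≤ ∑ _m : Fin d, (1 : ℝ) := Finset.sum_le_sum fun m _ => hbound m
        _ = d := by simp
        _ ≤ r := by exact_mod_cast hdr
    have hcomb : ∑ i, (σ i) ^ 2 * t i ≤ Ssum := by
      rw [hSsum]
      exact comb hr1 hr (fun i => (σ i) ^ 2) t
        (fun i j hij => by exact pow_le_pow_left₀ (hpos j) (hanti hij) 2)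
        (fun i => sq_nonneg _) ht0 ht1 hts
    have hfinal : Real.sqrt (∑ i, ∑ j, (Z i j) ^ 2) ≤ s := by
      rw [hs]
      apply Real.sqrt_le_sqrt
      rw [hZsum]
      exact hcomb
    calc |Matrix.trace (Xᵀ * Y)| = |∑ i, ∑ j, Z i j * Y i j| := by rw [hZ, trace_eq_sum]
      _ ≤ Real.sqrt (∑ i, ∑ j, (Z i j) ^ 2) * Real.sqrt (∑ i, ∑ j, (Y i j) ^ 2) := cs_abs Z Y
      _ ≤ Real.sqrt (∑ i, ∑ j, (Z i j) ^ 2) * 1 :=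
          mul_le_mul_of_nonneg_left hfrob (Real.sqrt_nonneg _)
      _ = Real.sqrt (∑ i, ∑ j, (Z i j) ^ 2) := mul_one _
      _ ≤ s := hfinal
end

section
/- For any real n₁×n₂ matrix X and any integer r with 1 ≤ r ≤ min(n₁,n₂), the partial Frobenius norm ‖X‖_{F,r} := sqrt(Σ_{i=1}^r σ_i(X)²) equals the maximum of ‖X·R‖_F over all n₂×r matrices R with operator norm ‖R‖_op ≤ 1. -/
open Matrix

/-- The operator norm (largest singular value) of a matrix. -/
noncomputable def opNorm {n₁ n₂ : ℕ} (A : Matrix (Fin n₁) (Fin n₂) ℝ) : ℝ :=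
  ‖LinearMap.toContinuousLinearMap (Matrix.toEuclideanLin A)‖

-- sum of squares as dot product
lemma sum_sq_eq_dot {n : ℕ} (v : Fin n → ℝ) : ∑ i, (v i)^2 = v ⬝ᵥ v := by
  simp [dotProduct, sq]

lemma sum_sq_mulVec {n m : ℕ} (A : Matrix (Fin n) (Fin m) ℝ) (x : Fin m → ℝ) :
    ∑ i, (A.mulVec x i)^2 = x ⬝ᵥ ((Aᵀ * A).mulVec x) := by
  rw [sum_sq_eq_dot, ← Matrix.mulVec_mulVec, Matrix.dotProduct_mulVec x,
    Matrix.vecMul_transpose]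

lemma sum_sq_mulVec_eq {n m : ℕ} (A : Matrix (Fin n) (Fin m) ℝ) (hA : Aᵀ * A = 1)
    (x : Fin m → ℝ) : ∑ i, (A.mulVec x i)^2 = ∑ j, (x j)^2 := by
  rw [sum_sq_mulVec, hA, Matrix.one_mulVec, sum_sq_eq_dot]

-- opNorm ≤ 1 in terms of sums of squares
lemma opNorm_le_one_iff {n m : ℕ} (A : Matrix (Fin n) (Fin m) ℝ) :
    opNorm A ≤ 1 ↔ ∀ x : Fin m → ℝ, ∑ i, (A.mulVec x i)^2 ≤ ∑ j, (x j)^2 := by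
  rw [opNorm, ContinuousLinearMap.opNorm_le_iff zero_le_one]
  constructor
  · intro h x
    have hx := h ((WithLp.equiv 2 (Fin m → ℝ)).symm x)
    rw [LinearMap.coe_toContinuousLinearMap', WithLp.equiv_symm_apply, Matrix.toEuclideanLin_apply_piLp_toLp,
      one_mul] at hx
    rw [EuclideanSpace.norm_eq, EuclideanSpace.norm_eq] at hx
    simp only [PiLp.toLp_apply, Real.norm_eq_abs, sq_abs] at hx
    have h2 : (0:ℝ) ≤ ∑ j, (x j)^2 := Finset.sum_nonneg fun j _ => sq_nonneg _
    exact (Real.sqrt_le_sqrt_iff h2).mp hx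
  · intro h x
    rw [LinearMap.coe_toContinuousLinearMap', one_mul]
    obtain ⟨y, rfl⟩ := (WithLp.equiv 2 (Fin m → ℝ)).symm.surjective x
    rw [WithLp.equiv_symm_apply, Matrix.toEuclideanLin_apply_piLp_toLp, EuclideanSpace.norm_eq,
      EuclideanSpace.norm_eq]
    simp only [PiLp.toLp_apply, Real.norm_eq_abs, sq_abs]
    exact Real.sqrt_le_sqrt (h y)

lemma transpose_bound {n m : ℕ} (A : Matrix (Fin n) (Fin m) ℝ)
    (h : ∀ x : Fin m → ℝ, ∑ i, (A.mulVec x i)^2 ≤ ∑ j, (x j)^2)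
    (v : Fin n → ℝ) : ∑ j, (Aᵀ.mulVec v j)^2 ≤ ∑ i, (v i)^2 := by
  set y := Aᵀ.mulVec v with hy
  set c := ∑ j, (y j)^2 with hc
  have hc0 : 0 ≤ c := Finset.sum_nonneg fun j _ => sq_nonneg _
  have key : c = (A.mulVec y) ⬝ᵥ v := by
    rw [hc, sum_sq_eq_dot, hy, Matrix.dotProduct_mulVec, Matrix.vecMul_transpose]
  have hT0 : 0 ≤ ∑ i, (v i)^2 := Finset.sum_nonneg fun i _ => sq_nonneg _
  have cs : c^2 ≤ (∑ i, (A.mulVec y i)^2) * ∑ i, (v i)^2 := by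
    rw [key]
    exact Finset.sum_mul_sq_le_sq_mul_sq _ _ _
  have cs2 : c^2 ≤ c * ∑ i, (v i)^2 :=
    cs.trans (mul_le_mul_of_nonneg_right (h y) hT0)
  rcases hc0.eq_or_lt with h0 | h0
  · rw [← h0] at *; exact hT0
  · have := cs2
    rw [sq] at this
    exact (mul_le_mul_iff_right₀ h0).mp this

lemma frobSq_eq_trace {n m : ℕ} (A : Matrix (Fin n) (Fin m) ℝ) :
    ∑ i, ∑ j, (A i j)^2 = Matrix.trace (Aᵀ * A) := by
  rw [Matrix.trace]
  simp only [Matrix.diag, Matrix.mul_apply, Matrix.transpose_apply]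
  rw [Finset.sum_comm]
  simp [sq]

lemma frobSq_mul_orth {n m k : ℕ} (U : Matrix (Fin n) (Fin k) ℝ) (hU : Uᵀ * U = 1)
    (M : Matrix (Fin k) (Fin m) ℝ) :
    ∑ i, ∑ j, ((U * M) i j)^2 = ∑ i, ∑ j, (M i j)^2 := by
  rw [frobSq_eq_trace, frobSq_eq_trace, Matrix.transpose_mul]
  congr 1
  calc Mᵀ * Uᵀ * (U * M) = Mᵀ * (Uᵀ * U) * M := by rw [Matrix.mul_assoc, Matrix.mul_assoc,
        Matrix.mul_assoc]
    _ = Mᵀ * M := by rw [hU, Matrix.mul_one]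

lemma abel_bound (m r : ℕ) (hr1 : 1 ≤ r) (hrm : r ≤ m) (f g : ℕ → ℝ)
    (hf0 : ∀ i, 0 ≤ f i) (hfa : ∀ i j, i ≤ j → f j ≤ f i)
    (hg0 : ∀ i, 0 ≤ g i) (hg1 : ∀ i, g i ≤ 1)
    (hgs : ∑ i ∈ Finset.range m, g i ≤ r) :
    ∑ i ∈ Finset.range m, f i * g i ≤ ∑ i ∈ Finset.range r, f i := by
  set s := f (r - 1) with hs
  have hs0 : 0 ≤ s := hf0 _
  have hsplit : ∀ h : ℕ → ℝ, ∑ i ∈ Finset.range m, h i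
      = ∑ i ∈ Finset.range r, h i + ∑ i ∈ Finset.Ico r m, h i := by
    intro h
    simp only [Finset.range_eq_Ico]
    exact (Finset.sum_Ico_consecutive _ (Nat.zero_le r) hrm).symm
  have h1 : ∑ i ∈ Finset.range r, f i * g i
      ≤ (∑ i ∈ Finset.range r, f i) + s * ((∑ i ∈ Finset.range r, g i) - r) := by
    have step : ∀ i ∈ Finset.range r, f i * g i ≤ f i + s * (g i - 1) := by
      intro i hi
      have hir : i ≤ r - 1 := Nat.le_sub_one_of_lt (Finset.mem_range.mp hi)
      have hfi : s ≤ f i := hfa _ _ hir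
      nlinarith [hg1 i, hg0 i]
    calc ∑ i ∈ Finset.range r, f i * g i ≤ ∑ i ∈ Finset.range r, (f i + s * (g i - 1)) :=
          Finset.sum_le_sum step
      _ = (∑ i ∈ Finset.range r, f i) + s * ((∑ i ∈ Finset.range r, g i) - r) := by
          rw [Finset.sum_add_distrib, ← Finset.mul_sum, Finset.sum_sub_distrib]
          simp [Finset.card_range]
  have h2 : ∑ i ∈ Finset.Ico r m, f i * g i ≤ s * ∑ i ∈ Finset.Ico r m, g i := by
    rw [Finset.mul_sum]
    refine Finset.sum_le_sum fun i hi => ?_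
    have hri : r - 1 ≤ i := le_trans (Nat.sub_le r 1) (Finset.mem_Ico.mp hi).1
    exact mul_le_mul_of_nonneg_right (hfa _ _ hri) (hg0 i)
  have hkey : s * ((∑ i ∈ Finset.range r, g i) - r) + s * ∑ i ∈ Finset.Ico r m, g i
      = s * ((∑ i ∈ Finset.range m, g i) - r) := by
    rw [hsplit g]; ring
  have hfin : s * ((∑ i ∈ Finset.range m, g i) - r) ≤ 0 :=
    mul_nonpos_of_nonneg_of_nonpos hs0 (by linarith)
  rw [hsplit (fun i => f i * g i)]
  linarith

/-- The partial Frobenius norm `‖X‖_{F,r} = sqrt(∑_{i=1}^r σ_i(X)²)` is the maximum of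
`‖X R‖_F` over all `n₂ × r` matrices `R` with operator norm at most 1. -/
theorem partialFro_eq_max_opNorm_le_one {n₁ n₂ r : ℕ}
    (X : Matrix (Fin n₁) (Fin n₂) ℝ)
    (U : Matrix (Fin n₁) (Fin (min n₁ n₂)) ℝ) (σ : Fin (min n₁ n₂) → ℝ)
    (V : Matrix (Fin n₂) (Fin (min n₁ n₂)) ℝ)
    (hSVD : IsSVD X U σ V) (hr1 : 1 ≤ r) (hr : r ≤ min n₁ n₂) :
    IsGreatest {c : ℝ | ∃ R : Matrix (Fin n₂) (Fin r) ℝ, opNorm R ≤ 1 ∧ c = frob (X * R)}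
      (Real.sqrt (∑ i : Fin r, (σ (Fin.castLE hr i)) ^ 2)) := by
  obtain ⟨hX, hU, hV, hanti, hpos⟩ := hSVD
  constructor
  · -- membership: take the first r columns of V
    set R₀ : Matrix (Fin n₂) (Fin r) ℝ := V.submatrix id (Fin.castLE hr) with hR₀def
    have hR0 : R₀ᵀ * R₀ = 1 := by
      ext i j
      have h' := congrFun (congrFun hV (Fin.castLE hr i)) (Fin.castLE hr j)
      simp only [Matrix.mul_apply, Matrix.transpose_apply, Matrix.one_apply,
        Matrix.submatrix_apply, id_eq, hR₀def] at h' ⊢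
      rw [h']
      simp [Fin.castLE_inj]
    refine ⟨R₀, (opNorm_le_one_iff R₀).mpr (fun x => (sum_sq_mulVec_eq R₀ hR0 x).le), ?_⟩
    have hVR : Vᵀ * R₀ = (1 : Matrix (Fin (min n₁ n₂)) (Fin (min n₁ n₂)) ℝ).submatrix id (Fin.castLE hr) := by
      ext i j
      have h' := congrFun (congrFun hV i) (Fin.castLE hr j)
      simp only [Matrix.mul_apply, Matrix.submatrix_apply, id_eq, hR₀def] at h' ⊢
      exact h'
    have hXR : X * R₀ = U * (Matrix.diagonal σ *
        ((1 : Matrix (Fin (min n₁ n₂)) (Fin (min n₁ n₂)) ℝ).submatrix id (Fin.castLE hr))) := by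
      rw [hX, Matrix.mul_assoc, Matrix.mul_assoc, hVR]
    have hval : ∑ i, ∑ j, ((Matrix.diagonal σ *
        ((1 : Matrix (Fin (min n₁ n₂)) (Fin (min n₁ n₂)) ℝ).submatrix id (Fin.castLE hr))) i j)^2
        = ∑ j : Fin r, (σ (Fin.castLE hr j))^2 := by
      rw [Finset.sum_comm]
      refine Finset.sum_congr rfl fun j _ => ?_
      rw [Finset.sum_eq_single (Fin.castLE hr j)]
      · simp [Matrix.diagonal_mul, Matrix.one_apply]
      · intro a _ ha
        simp [Matrix.diagonal_mul, Matrix.one_apply, ha]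
      · intro h; exact absurd (Finset.mem_univ _) h
    rw [frob, hXR, frobSq_mul_orth U hU, hval]
  · -- upper bound
    rintro c ⟨R, hR, rfl⟩
    set B : Matrix (Fin (min n₁ n₂)) (Fin r) ℝ := Vᵀ * R with hB
    have hXR : X * R = U * (Matrix.diagonal σ * B) := by
      rw [hX, Matrix.mul_assoc, Matrix.mul_assoc, hB]
    have hRx : ∀ x : Fin r → ℝ, ∑ i, (R.mulVec x i)^2 ≤ ∑ j, (x j)^2 :=
      (opNorm_le_one_iff R).mp hR
    have hVx : ∀ x : Fin (min n₁ n₂) → ℝ, ∑ i, (V.mulVec x i)^2 ≤ ∑ j, (x j)^2 :=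
      fun x => (sum_sq_mulVec_eq V hV x).le
    -- row bounds
    have hb1 : ∀ i : Fin (min n₁ n₂), ∑ j, (B i j)^2 ≤ 1 := by
      intro i
      have hBij : ∀ j, B i j = Rᵀ.mulVec (fun k => V k i) j := by
        intro j
        simp [hB, Matrix.mul_apply, Matrix.mulVec, dotProduct, mul_comm]
      have hcol : ∑ k, (V k i)^2 = 1 := by
        have h' := congrFun (congrFun hV i) i
        simp only [Matrix.mul_apply, Matrix.transpose_apply, Matrix.one_apply_eq] at h'
        rw [← h']
        exact Finset.sum_congr rfl fun k _ => sq (V k i)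
      calc ∑ j, (B i j)^2 = ∑ j, (Rᵀ.mulVec (fun k => V k i) j)^2 := by
            exact Finset.sum_congr rfl fun j _ => by rw [hBij j]
        _ ≤ ∑ k, (V k i)^2 := transpose_bound R hRx _
        _ = 1 := hcol
    -- total bound
    have hbs : ∑ i : Fin (min n₁ n₂), ∑ j, (B i j)^2 ≤ (r : ℝ) := by
      rw [Finset.sum_comm]
      have step1 : ∀ j : Fin r, ∑ i, (B i j)^2 ≤ ∑ k, (R k j)^2 := by
        intro j
        have hBij : ∀ i, B i j = Vᵀ.mulVec (fun k => R k j) i := by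
          intro i
          simp [hB, Matrix.mul_apply, Matrix.mulVec, dotProduct]
        calc ∑ i, (B i j)^2 = ∑ i, (Vᵀ.mulVec (fun k => R k j) i)^2 :=
              Finset.sum_congr rfl fun i _ => by rw [hBij i]
          _ ≤ ∑ k, (R k j)^2 := transpose_bound V hVx _
      have step2 : ∀ j : Fin r, ∑ k, (R k j)^2 ≤ 1 := by
        intro j
        have h1 := hRx (fun l => if l = j then (1:ℝ) else 0)
        have e1 : ∀ k, R.mulVec (fun l => if l = j then (1:ℝ) else 0) k = R k j := by
          intro k
          simp [Matrix.mulVec, dotProduct]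
        have e2 : ∑ l, (if l = j then (1:ℝ) else 0)^2 = 1 := by
          simp [sq, ite_mul, mul_ite]
        calc ∑ k, (R k j)^2 = ∑ k, (R.mulVec (fun l => if l = j then (1:ℝ) else 0) k)^2 :=
              Finset.sum_congr rfl fun k _ => by rw [e1 k]
          _ ≤ ∑ l, (if l = j then (1:ℝ) else 0)^2 := h1
          _ = 1 := e2
      calc ∑ j : Fin r, ∑ i, (B i j)^2 ≤ ∑ j : Fin r, (1:ℝ) :=
            Finset.sum_le_sum fun j _ => (step1 j).trans (step2 j)
        _ = r := by simp
    -- the main Abel-summation bound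
    set f : ℕ → ℝ := fun i => if h : i < (min n₁ n₂) then (σ ⟨i, h⟩)^2 else 0 with hf
    set g : ℕ → ℝ := fun i => if h : i < (min n₁ n₂) then ∑ j, (B ⟨i, h⟩ j)^2 else 0 with hg
    have hf0 : ∀ i, 0 ≤ f i := by
      intro i; rw [hf]; dsimp only; split
      · exact sq_nonneg _
      · exact le_refl _
    have hfa : ∀ i j, i ≤ j → f j ≤ f i := by
      intro i j hij
      rw [hf]; dsimp only
      by_cases hjm : j < (min n₁ n₂)
      · have him : i < (min n₁ n₂) := lt_of_le_of_lt hij hjm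
        rw [dif_pos hjm, dif_pos him]
        have hle : σ (⟨j, hjm⟩ : Fin (min n₁ n₂)) ≤ σ ⟨i, him⟩ :=
          hanti (by exact Fin.mk_le_mk.mpr hij)
        exact pow_le_pow_left₀ (hpos _) hle 2
      · rw [dif_neg hjm]
        split
        · exact sq_nonneg _
        · exact le_refl _
    have hg0 : ∀ i, 0 ≤ g i := by
      intro i; rw [hg]; dsimp only; split
      · exact Finset.sum_nonneg fun j _ => sq_nonneg _
      · exact le_refl _
    have hg1 : ∀ i, g i ≤ 1 := by
      intro i; rw [hg]; dsimp only; split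
      · exact hb1 _
      · exact zero_le_one
    have hgs : ∑ i ∈ Finset.range (min n₁ n₂), g i ≤ (r : ℝ) := by
      rw [← Fin.sum_univ_eq_sum_range]
      calc ∑ i : Fin (min n₁ n₂), g ↑i = ∑ i : Fin (min n₁ n₂), ∑ j, (B i j)^2 := by
            refine Finset.sum_congr rfl fun i _ => ?_
            rw [hg]; dsimp only
            rw [dif_pos i.is_lt]
        _ ≤ (r : ℝ) := hbs
    have habel := abel_bound (min n₁ n₂) r hr1 hr f g hf0 hfa hg0 hg1 hgs
    have hL : ∑ i ∈ Finset.range (min n₁ n₂), f i * g i = ∑ i : Fin (min n₁ n₂), (σ i)^2 * ∑ j, (B i j)^2 := by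
      rw [← Fin.sum_univ_eq_sum_range (fun i => f i * g i)]
      refine Finset.sum_congr rfl fun i _ => ?_
      rw [hf, hg]; dsimp only
      rw [dif_pos i.is_lt, dif_pos i.is_lt]
    have hRr : ∑ i ∈ Finset.range r, f i = ∑ i : Fin r, (σ (Fin.castLE hr i))^2 := by
      rw [← Fin.sum_univ_eq_sum_range (fun i => f i)]
      refine Finset.sum_congr rfl fun i _ => ?_
      rw [hf]; dsimp only
      rw [dif_pos (lt_of_lt_of_le i.is_lt hr)]
      congr 1
    have hdiag : ∑ i, ∑ j, ((Matrix.diagonal σ * B) i j)^2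
        = ∑ i : Fin (min n₁ n₂), (σ i)^2 * ∑ j, (B i j)^2 := by
      refine Finset.sum_congr rfl fun i _ => ?_
      rw [Finset.mul_sum]
      exact Finset.sum_congr rfl fun j _ => by rw [Matrix.diagonal_mul, mul_pow]
    rw [frob, hXR, frobSq_mul_orth U hU, hdiag]
    exact Real.sqrt_le_sqrt (by rw [← hL, ← hRr]; exact habel)
end

section
/- Let X be a real n₁×n₂ matrix, r ≤ min(n₁,n₂), and let P_r(X) denote the best rank-r approximation of X in Frobenius norm (given by the truncated SVD). Then for every n₁×n₂ matrix Y of rank at most r, one has ‖X − P_r(X)‖_{F,r} ≤ ‖X − Y‖_{F,r}, where ‖A‖_{F,r} := sqrt(Σ_{i=1}^r σ_i(A)²). -/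
open Matrix

def Frame {n₁ n₂ k : ℕ} (A : Matrix (Fin n₁) (Fin n₂) ℝ)
    (V : Matrix (Fin n₂) (Fin k) ℝ) (σ : Fin k → ℝ) : Prop :=
  Aᵀ * A = V * diagonal (fun i => σ i ^ 2) * Vᵀ ∧ Vᵀ * V = 1 ∧ Antitone σ ∧ ∀ i, 0 ≤ σ i

lemma frame_of_isSVD {n₁ n₂ k : ℕ} {X : Matrix (Fin n₁) (Fin n₂) ℝ}
    {U : Matrix (Fin n₁) (Fin k) ℝ} {σ : Fin k → ℝ} {V : Matrix (Fin n₂) (Fin k) ℝ}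
    (h : IsSVD X U σ V) : Frame X V σ := by
  obtain ⟨hX, hU, hV, hs, hnn⟩ := h
  refine ⟨?_, hV, hs, hnn⟩
  subst hX
  calc (U * diagonal σ * Vᵀ)ᵀ * (U * diagonal σ * Vᵀ)
      = V * (diagonal σ * (Uᵀ * U) * diagonal σ) * Vᵀ := by
        simp [transpose_mul, diagonal_transpose, Matrix.mul_assoc]
    _ = V * diagonal (fun i => σ i ^ 2) * Vᵀ := by
        rw [hU, Matrix.mul_one, diagonal_mul_diagonal]
        congr 2
        ext i; ring

lemma frob_sq {n₁ n₂ : ℕ} (A : Matrix (Fin n₁) (Fin n₂) ℝ) :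
    frob A ^ 2 = ∑ i, ∑ j, (A i j) ^ 2 := by
  rw [frob, Real.sq_sqrt]
  positivity

lemma frob_sq_eq_trace {n₁ n₂ : ℕ} (A : Matrix (Fin n₁) (Fin n₂) ℝ) :
    frob A ^ 2 = (Aᵀ * A).trace := by
  rw [frob_sq, Matrix.trace]
  rw [Finset.sum_comm]
  congr 1; ext j
  simp [Matrix.diag, Matrix.mul_apply, pow_two]

lemma frame_frob_sq {n₁ n₂ k : ℕ} {A : Matrix (Fin n₁) (Fin n₂) ℝ}
    {V : Matrix (Fin n₂) (Fin k) ℝ} {σ : Fin k → ℝ} (h : Frame A V σ) :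
    frob A ^ 2 = ∑ i, σ i ^ 2 := by
  rw [frob_sq_eq_trace, h.1, Matrix.trace_mul_cycle, h.2.1,
    Matrix.one_mul, Matrix.trace_diagonal]

lemma dot_self_nonneg {m : ℕ} (v : Fin m → ℝ) : 0 ≤ v ⬝ᵥ v :=
  Finset.sum_nonneg fun _ _ => mul_self_nonneg _

lemma dot_self_pos {m : ℕ} {v : Fin m → ℝ} (hv : v ≠ 0) : 0 < v ⬝ᵥ v := by
  rcases (dot_self_nonneg v).lt_or_eq with h | h
  · exact h
  · exact absurd ((dotProduct_self_eq_zero).mp h.symm) hv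

lemma mulVec_dot_self {m n : ℕ} (M : Matrix (Fin m) (Fin n) ℝ) (v : Fin n → ℝ) :
    (M *ᵥ v) ⬝ᵥ (M *ᵥ v) = v ⬝ᵥ ((Mᵀ * M) *ᵥ v) := by
  rw [← Matrix.mulVec_mulVec, Matrix.dotProduct_mulVec v, Matrix.vecMul_transpose,
    dotProduct_comm]

/-- Bessel: `‖Vᵀw‖² ≤ ‖w‖²` for `V` with orthonormal columns. -/
lemma bessel {n k : ℕ} {V : Matrix (Fin n) (Fin k) ℝ} (hV : Vᵀ * V = 1) (w : Fin n → ℝ) :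
    (Vᵀ *ᵥ w) ⬝ᵥ (Vᵀ *ᵥ w) ≤ w ⬝ᵥ w := by
  have h1 : (Vᵀ *ᵥ w) ⬝ᵥ (Vᵀ *ᵥ w) = w ⬝ᵥ ((V * Vᵀ) *ᵥ w) := by
    simpa using mulVec_dot_self Vᵀ w
  set Q := V * Vᵀ with hQ
  have hQQ : Q * Q = Q := by
    rw [hQ, Matrix.mul_assoc, ← Matrix.mul_assoc Vᵀ, hV, Matrix.one_mul]
  have hQt : Qᵀ = Q := by rw [hQ, transpose_mul, transpose_transpose]
  have key : 0 ≤ (w - Q *ᵥ w) ⬝ᵥ (w - Q *ᵥ w) := dot_self_nonneg _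
  have expand : (w - Q *ᵥ w) ⬝ᵥ (w - Q *ᵥ w) = w ⬝ᵥ w - w ⬝ᵥ (Q *ᵥ w) := by
    have hQQw : (Q *ᵥ w) ⬝ᵥ (Q *ᵥ w) = w ⬝ᵥ (Q *ᵥ w) := by
      rw [mulVec_dot_self, hQt, hQQ]
    have hcomm : (Q *ᵥ w) ⬝ᵥ w = w ⬝ᵥ (Q *ᵥ w) := dotProduct_comm _ _
    rw [sub_dotProduct, dotProduct_sub, dotProduct_sub, hQQw, hcomm]
    ring
  rw [h1]
  nlinarith [key, expand]

lemma frame_quad {n₁ n₂ k : ℕ} {A : Matrix (Fin n₁) (Fin n₂) ℝ}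
    {V : Matrix (Fin n₂) (Fin k) ℝ} {σ : Fin k → ℝ} (h : Frame A V σ) (w : Fin n₂ → ℝ) :
    (A *ᵥ w) ⬝ᵥ (A *ᵥ w) = ∑ j, σ j ^ 2 * ((Vᵀ *ᵥ w) j) ^ 2 := by
  rw [mulVec_dot_self, h.1]
  have : (V * diagonal (fun i => σ i ^ 2) * Vᵀ) *ᵥ w
      = V *ᵥ (diagonal (fun i => σ i ^ 2) *ᵥ (Vᵀ *ᵥ w)) := by
    rw [Matrix.mulVec_mulVec, Matrix.mulVec_mulVec]
  rw [this, Matrix.dotProduct_mulVec w, ← Matrix.transpose_transpose V,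
    Matrix.vecMul_transpose, Matrix.transpose_transpose]
  simp [dotProduct, Matrix.mulVec_diagonal]
  congr 1; ext j; ring

set_option maxHeartbeats 1000000 in
lemma weyl {n₁ n₂ kA kB r : ℕ} {A B Y : Matrix (Fin n₁) (Fin n₂) ℝ}
    {VA : Matrix (Fin n₂) (Fin kA) ℝ} {σA : Fin kA → ℝ}
    {VB : Matrix (Fin n₂) (Fin kB) ℝ} {σB : Fin kB → ℝ}
    (hA : Frame A VA σA) (hB : Frame B VB σB) (hAB : A = B + Y) (hY : Y.rank ≤ r)
    {i : ℕ} (hiA : r + i < kA) (hiB : i < kB) :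
    σA ⟨r + i, hiA⟩ ≤ σB ⟨i, hiB⟩ := by
  classical
  set d := r + i + 1 with hd
  have hdA : d ≤ kA := hiA
  have hiB' : i ≤ kB := hiB.le
  set g : Fin d → Fin kA := Fin.castLE hdA with hg
  set VA' : Matrix (Fin n₂) (Fin d) ℝ := VA.submatrix id g with hVA'
  set M₁ : Matrix (Fin n₁) (Fin d) ℝ := Y * VA' with hM₁
  set M₂ : Matrix (Fin i) (Fin d) ℝ := (VBᵀ.submatrix (Fin.castLE hiB') id) * VA' with hM₂
  -- find nonzero c in the kernel of both
  obtain ⟨c, hc1, hc2, hc0⟩ :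
      ∃ c : Fin d → ℝ, M₁ *ᵥ c = 0 ∧ M₂ *ᵥ c = 0 ∧ c ≠ 0 := by
    have hk1 : d ≤ Module.finrank ℝ (LinearMap.ker M₁.mulVecLin) + r := by
      have h1 : Module.finrank ℝ (LinearMap.range M₁.mulVecLin) ≤ r :=
        le_trans (Matrix.rank_mul_le_left Y VA') hY
      have := LinearMap.finrank_range_add_finrank_ker M₁.mulVecLin
      rw [Module.finrank_fin_fun] at this
      omega
    have hk2 : d ≤ Module.finrank ℝ (LinearMap.ker M₂.mulVecLin) + i := by
      have h2 : Module.finrank ℝ (LinearMap.range M₂.mulVecLin) ≤ i :=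
        Matrix.rank_le_height M₂
      have := LinearMap.finrank_range_add_finrank_ker M₂.mulVecLin
      rw [Module.finrank_fin_fun] at this
      omega
    have hsum := Submodule.finrank_sup_add_finrank_inf_eq
      (LinearMap.ker M₁.mulVecLin) (LinearMap.ker M₂.mulVecLin)
    have hsup : Module.finrank ℝ
        ↥(LinearMap.ker M₁.mulVecLin ⊔ LinearMap.ker M₂.mulVecLin) ≤ d := by
      have := Submodule.finrank_le (LinearMap.ker M₁.mulVecLin ⊔ LinearMap.ker M₂.mulVecLin)
      rwa [Module.finrank_fin_fun] at this
    have hpos : 0 < Module.finrank ℝ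
        ↥(LinearMap.ker M₁.mulVecLin ⊓ LinearMap.ker M₂.mulVecLin) := by omega
    have hne : (LinearMap.ker M₁.mulVecLin ⊓ LinearMap.ker M₂.mulVecLin) ≠ ⊥ := by
      intro h
      rw [h] at hpos
      simp at hpos
    obtain ⟨c, hc, hc0⟩ := Submodule.exists_mem_ne_zero_of_ne_bot hne
    exact ⟨c, hc.1, hc.2, hc0⟩
  set w : Fin n₂ → ℝ := VA' *ᵥ c with hw
  -- VAᵀ * VA' is a slice of the identity
  have hVAVA' : VAᵀ * VA' = (1 : Matrix (Fin kA) (Fin kA) ℝ).submatrix id g := by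
    have h1 : VAᵀ * VA' = (VAᵀ * VA).submatrix id g := by
      ext j a
      simp [hVA', Matrix.mul_apply]
    rw [h1, hA.2.1]
  have hVA'VA' : VA'ᵀ * VA' = 1 := by
    ext a b
    have : VA'ᵀ * VA' = (VAᵀ * VA').submatrix g id := by
      ext a b
      simp [hVA', Matrix.mul_apply]
    rw [this, hVAVA']
    simp [Matrix.one_apply, Fin.ext_iff, hg]
  have hwc : w ⬝ᵥ w = c ⬝ᵥ c := by
    rw [hw, mulVec_dot_self, hVA'VA', Matrix.one_mulVec]
  set y : Fin kA → ℝ := VAᵀ *ᵥ w with hy0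
  have hy : ∀ j : Fin kA, y j = if h : (j : ℕ) < d then c ⟨j, h⟩ else 0 := by
    intro j
    rw [hy0, hw, Matrix.mulVec_mulVec, hVAVA']
    show ∑ a, (1 : Matrix (Fin kA) (Fin kA) ℝ) j (g a) * c a = _
    have hone : ∀ a : Fin d, (1 : Matrix (Fin kA) (Fin kA) ℝ) j (g a)
        = if (j : ℕ) = (a : ℕ) then 1 else 0 := by
      intro a
      rw [Matrix.one_apply]
      simp [hg, Fin.ext_iff]
    simp only [hone]
    by_cases h : (j : ℕ) < d
    · rw [dif_pos h, Finset.sum_eq_single ⟨(j : ℕ), h⟩]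
      · simp
      · intro a _ ha
        have hne : (j : ℕ) ≠ (a : ℕ) := fun hh => ha (Fin.ext hh.symm)
        simp [hne]
      · intro h'; exact absurd (Finset.mem_univ _) h'
    · rw [dif_neg h]
      refine Finset.sum_eq_zero fun a _ => ?_
      have hne : (j : ℕ) ≠ (a : ℕ) := by have := a.isLt; omega
      simp [hne]
  have hyy : y ⬝ᵥ y = c ⬝ᵥ c := by
    have hQw : VA *ᵥ y = w := by
      rw [hy0, hw, Matrix.mulVec_mulVec, Matrix.mulVec_mulVec, Matrix.mul_assoc, hVAVA']
      have hid : VA * (1 : Matrix (Fin kA) (Fin kA) ℝ).submatrix id g = VA.submatrix id g := by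
        ext m a
        simp [Matrix.mul_apply, Matrix.one_apply, Matrix.submatrix_apply]
      rw [hid, hVA']
    calc y ⬝ᵥ y = (VAᵀ *ᵥ w) ⬝ᵥ (VAᵀ *ᵥ w) := by rw [hy0]
      _ = w ⬝ᵥ ((VA * VAᵀ) *ᵥ w) := by simpa using mulVec_dot_self VAᵀ w
      _ = w ⬝ᵥ (VA *ᵥ y) := by rw [← Matrix.mulVec_mulVec, hy0]
      _ = w ⬝ᵥ w := by rw [hQw]
      _ = c ⬝ᵥ c := hwc
  -- lower bound for A side
  have hAq : (A *ᵥ w) ⬝ᵥ (A *ᵥ w) = ∑ j, σA j ^ 2 * y j ^ 2 := frame_quad hA w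
  have hlow : σA ⟨r + i, hiA⟩ ^ 2 * (c ⬝ᵥ c) ≤ (A *ᵥ w) ⬝ᵥ (A *ᵥ w) := by
    rw [hAq]
    have : ∀ j : Fin kA, σA ⟨r + i, hiA⟩ ^ 2 * y j ^ 2 ≤ σA j ^ 2 * y j ^ 2 := by
      intro j
      by_cases h : (j : ℕ) < d
      · have hjle : j ≤ (⟨r + i, hiA⟩ : Fin kA) := by
          simp only [Fin.le_def]
          omega
        have h1 : σA ⟨r + i, hiA⟩ ≤ σA j := hA.2.2.1 hjle
        have h2 : (0:ℝ) ≤ σA ⟨r + i, hiA⟩ := hA.2.2.2 _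
        exact mul_le_mul_of_nonneg_right (pow_le_pow_left₀ h2 h1 2) (sq_nonneg _)
      · rw [hy j, dif_neg h]
        simp
    calc σA ⟨r + i, hiA⟩ ^ 2 * (c ⬝ᵥ c) = ∑ j, σA ⟨r + i, hiA⟩ ^ 2 * y j ^ 2 := by
          rw [← Finset.mul_sum]
          congr 1
          rw [← hyy]
          simp [dotProduct, pow_two]
      _ ≤ ∑ j, σA j ^ 2 * y j ^ 2 := Finset.sum_le_sum fun j _ => this j
  -- A and B agree on w
  have hABw : A *ᵥ w = B *ᵥ w := by
    rw [hAB, Matrix.add_mulVec]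
    have : Y *ᵥ w = 0 := by
      rw [hw, Matrix.mulVec_mulVec, ← hM₁, hc1]
    rw [this, add_zero]
  -- upper bound for B side
  set z : Fin kB → ℝ := VBᵀ *ᵥ w with hz0
  have hz : ∀ j : Fin kB, (j : ℕ) < i → z j = 0 := by
    intro j hj
    have h2 : (M₂ *ᵥ c) ⟨(j : ℕ), hj⟩ = 0 := by rw [hc2]; rfl
    rw [hM₂, ← Matrix.mulVec_mulVec] at h2
    have hcast : Fin.castLE hiB' ⟨(j : ℕ), hj⟩ = j := Fin.ext rfl
    have key : ((VBᵀ.submatrix (Fin.castLE hiB') id) *ᵥ (VA' *ᵥ c)) ⟨(j : ℕ), hj⟩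
        = (VBᵀ *ᵥ (VA' *ᵥ c)) j := by
      simp [Matrix.mulVec, dotProduct, Matrix.submatrix_apply, hcast]
    rw [key] at h2
    have hzz : z j = (VBᵀ *ᵥ (VA' *ᵥ c)) j := by rw [hz0, hw]
    rw [hzz]
    exact h2
  have hBq : (B *ᵥ w) ⬝ᵥ (B *ᵥ w) = ∑ j, σB j ^ 2 * z j ^ 2 := frame_quad hB w
  have hup : (B *ᵥ w) ⬝ᵥ (B *ᵥ w) ≤ σB ⟨i, hiB⟩ ^ 2 * (c ⬝ᵥ c) := by
    rw [hBq]
    have hterm : ∀ j : Fin kB, σB j ^ 2 * z j ^ 2 ≤ σB ⟨i, hiB⟩ ^ 2 * z j ^ 2 := by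
      intro j
      by_cases h : (j : ℕ) < i
      · rw [hz j h]; simp
      · have hjle : (⟨i, hiB⟩ : Fin kB) ≤ j := by
          simp only [Fin.le_def]
          omega
        have h1 : σB j ≤ σB ⟨i, hiB⟩ := hB.2.2.1 hjle
        have h2 : (0:ℝ) ≤ σB j := hB.2.2.2 _
        exact mul_le_mul_of_nonneg_right (pow_le_pow_left₀ h2 h1 2) (sq_nonneg _)
    calc ∑ j, σB j ^ 2 * z j ^ 2 ≤ ∑ j, σB ⟨i, hiB⟩ ^ 2 * z j ^ 2 :=
          Finset.sum_le_sum fun j _ => hterm j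
      _ = σB ⟨i, hiB⟩ ^ 2 * (z ⬝ᵥ z) := by
          rw [← Finset.mul_sum]
          congr 1
          simp [dotProduct, pow_two]
      _ ≤ σB ⟨i, hiB⟩ ^ 2 * (c ⬝ᵥ c) := by
          have hbes : z ⬝ᵥ z ≤ w ⬝ᵥ w := bessel hB.2.1 w
          have := hwc
          nlinarith [sq_nonneg (σB ⟨i, hiB⟩)]
  have hcc : 0 < c ⬝ᵥ c := dot_self_pos hc0
  have hsq : σA ⟨r + i, hiA⟩ ^ 2 ≤ σB ⟨i, hiB⟩ ^ 2 := by
    rw [hABw] at hlow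
    have := le_trans hlow hup
    exact le_of_mul_le_mul_right (by linarith) hcc
  have h1 : (0:ℝ) ≤ σA ⟨r + i, hiA⟩ := hA.2.2.2 _
  have h2 : (0:ℝ) ≤ σB ⟨i, hiB⟩ := hB.2.2.2 _
  nlinarith [hsq]

lemma vdv_apply {n k : ℕ} (W : Matrix (Fin n) (Fin k) ℝ) (v : Fin k → ℝ) (m m' : Fin n) :
    (W * diagonal v * Wᵀ) m m' = ∑ j, W m j * v j * W m' j := by
  rw [Matrix.mul_apply]
  refine Finset.sum_congr rfl fun j _ => ?_
  rw [Matrix.mul_diagonal, Matrix.transpose_apply]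

lemma exists_frame {n₁ n₂ : ℕ} (X : Matrix (Fin n₁) (Fin n₂) ℝ) :
    ∃ (V : Matrix (Fin n₂) (Fin n₂) ℝ) (τ : Fin n₂ → ℝ), Frame X V τ := by
  classical
  have hS : (Xᵀ * X).IsHermitian := by
    have := Matrix.isHermitian_conjTranspose_mul_self X
    rwa [Matrix.conjTranspose_eq_transpose_of_trivial] at this
  have hPSD : (Xᵀ * X).PosSemidef := by
    have := Matrix.posSemidef_conjTranspose_mul_self X
    rwa [Matrix.conjTranspose_eq_transpose_of_trivial] at this
  set lam := hS.eigenvalues with hlam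
  have hnn : ∀ j, 0 ≤ lam j := fun j => hPSD.eigenvalues_nonneg j
  set V₀ : Matrix (Fin n₂) (Fin n₂) ℝ := (Matrix.IsHermitian.eigenvectorUnitary hS : Matrix (Fin n₂) (Fin n₂) ℝ) with hV₀
  have hunit : V₀ᵀ * V₀ = 1 := by
    have := (Matrix.mem_unitaryGroup_iff').mp (Matrix.IsHermitian.eigenvectorUnitary hS).2
    calc V₀ᵀ * V₀ = star V₀ * V₀ := by
          rw [Matrix.star_eq_conjTranspose, Matrix.conjTranspose_eq_transpose_of_trivial]
      _ = 1 := this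
  have hspec : Xᵀ * X = V₀ * diagonal lam * V₀ᵀ := by
    have h := Matrix.IsHermitian.spectral_theorem hS
    rw [Unitary.conjStarAlgAut_apply, Matrix.star_eq_conjTranspose, Matrix.conjTranspose_eq_transpose_of_trivial] at h
    simpa using h
  set e : Equiv.Perm (Fin n₂) := Fin.revPerm.trans (Tuple.sort lam) with he
  refine ⟨V₀.submatrix id ⇑e, fun j => Real.sqrt (lam (e j)), ?_, ?_, ?_, ?_⟩
  · rw [hspec]
    ext m m'
    rw [vdv_apply, vdv_apply]
    rw [← Equiv.sum_comp e (fun j => V₀ m j * lam j * V₀ m' j)]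
    refine Finset.sum_congr rfl fun j _ => ?_
    rw [Real.sq_sqrt (hnn _)]
    simp [Matrix.submatrix_apply]
  · ext a b
    have : ((V₀.submatrix id ⇑e)ᵀ * V₀.submatrix id ⇑e) a b = (V₀ᵀ * V₀) (e a) (e b) := by
      simp [Matrix.mul_apply, Matrix.submatrix_apply]
    rw [this, hunit]
    simp [Matrix.one_apply, EmbeddingLike.apply_eq_iff_eq]
  · intro a b hab
    have := Tuple.monotone_sort lam (Fin.rev_le_rev.mpr hab)
    exact Real.sqrt_le_sqrt this
  · intro j
    exact Real.sqrt_nonneg _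

set_option maxHeartbeats 1000000 in
lemma frob_truncation {n₁ n₂ r : ℕ} {X : Matrix (Fin n₁) (Fin n₂) ℝ}
    {V : Matrix (Fin n₂) (Fin n₂) ℝ} {τ : Fin n₂ → ℝ} (hF : Frame X V τ) (hr : r ≤ n₂) :
    ∃ Z : Matrix (Fin n₁) (Fin n₂) ℝ, Z.rank ≤ r ∧
      frob (X - Z) ^ 2 = ∑ j : Fin n₂, (if (j : ℕ) < r then 0 else τ j ^ 2) := by
  classical
  set g : Fin r → Fin n₂ := Fin.castLE hr with hg
  set Vr := V.submatrix id g with hVr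
  refine ⟨X * Vr * Vrᵀ, ?_, ?_⟩
  · exact le_trans (Matrix.rank_mul_le_right _ _) (Matrix.rank_le_height Vrᵀ)
  have hVVr : Vᵀ * Vr = (1 : Matrix (Fin n₂) (Fin n₂) ℝ).submatrix id g := by
    have h1 : Vᵀ * Vr = (Vᵀ * V).submatrix id g := by
      ext j a
      simp [hVr, Matrix.mul_apply]
    rw [h1, hF.2.1]
  have hVrVr : Vrᵀ * Vr = 1 := by
    have h1 : Vrᵀ * Vr = (Vᵀ * Vr).submatrix g id := by
      ext a b
      simp [hVr, Matrix.mul_apply]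
    rw [h1, hVVr]
    ext a b
    simp [Matrix.one_apply, Fin.ext_iff, hg]
  set Q := Vr * Vrᵀ with hQdef
  have hQQ : Q * Q = Q := by
    rw [hQdef, Matrix.mul_assoc, ← Matrix.mul_assoc Vrᵀ, hVrVr, Matrix.one_mul]
  set S := Xᵀ * X with hSdef
  have hXZ : X - X * Vr * Vrᵀ = X * (1 - Q) := by
    rw [Matrix.mul_sub, Matrix.mul_one, hQdef, Matrix.mul_assoc]
  have hPt : (1 - Q)ᵀ = 1 - Q := by
    rw [transpose_sub, transpose_one, hQdef, transpose_mul, transpose_transpose]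
  have hPP : (1 - Q) * (1 - Q) = 1 - Q := by
    have h0 : Q * (1 - Q) = 0 := by rw [Matrix.mul_sub, Matrix.mul_one, hQQ, sub_self]
    rw [Matrix.sub_mul, h0, Matrix.one_mul, sub_zero]
  have hexp : (X * (1 - Q))ᵀ * (X * (1 - Q)) = (1 - Q) * S * (1 - Q) := by
    rw [transpose_mul, hPt, hSdef]
    rw [Matrix.mul_assoc, Matrix.mul_assoc, Matrix.mul_assoc]
  have htr : ((1 - Q) * S * (1 - Q)).trace = (S * (1 - Q)).trace := by
    rw [Matrix.trace_mul_cycle, hPP, Matrix.trace_mul_comm]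
  have htrS : S.trace = ∑ j, τ j ^ 2 := by
    rw [hSdef, ← frob_sq_eq_trace, frame_frob_sq hF]
  have htrSQ : (S * Q).trace = ∑ j : Fin n₂, (if (j : ℕ) < r then τ j ^ 2 else 0) := by
    have hS1 : S = V * diagonal (fun i => τ i ^ 2) * Vᵀ := hF.1
    have h1 : (S * Q).trace
        = (diagonal (fun i => τ i ^ 2) * ((Vᵀ * Vr) * (Vᵀ * Vr)ᵀ)).trace := by
      rw [hS1, hQdef]
      have e1 : V * diagonal (fun i => τ i ^ 2) * Vᵀ * (Vr * Vrᵀ)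
          = V * (diagonal (fun i => τ i ^ 2) * ((Vᵀ * Vr) * Vrᵀ)) := by
        simp only [Matrix.mul_assoc]
      rw [e1, Matrix.trace_mul_comm]
      congr 1
      rw [transpose_mul, transpose_transpose]
      simp only [Matrix.mul_assoc]
    rw [h1, hVVr]
    rw [Matrix.trace]
    refine Finset.sum_congr rfl fun j _ => ?_
    have hdiagK : ((1 : Matrix (Fin n₂) (Fin n₂) ℝ).submatrix id g
        * ((1 : Matrix (Fin n₂) (Fin n₂) ℝ).submatrix id g)ᵀ) j j
        = if (j : ℕ) < r then 1 else 0 := by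
      rw [Matrix.mul_apply]
      by_cases h : (j : ℕ) < r
      · rw [if_pos h, Finset.sum_eq_single ⟨(j : ℕ), h⟩]
        · simp [Matrix.one_apply, hg, Fin.ext_iff]
        · intro a _ ha
          have hne : j ≠ g a := by
            intro hja
            apply ha
            have := congrArg Fin.val hja
            simp [hg] at this
            exact Fin.ext this.symm
          simp [Matrix.one_apply, hne]
        · intro h'; exact absurd (Finset.mem_univ _) h'
      · rw [if_neg h]
        refine Finset.sum_eq_zero fun a _ => ?_
        have hne : j ≠ g a := by
          intro hja
          have := congrArg Fin.val hja
          simp [hg] at this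
          omega
        simp [Matrix.one_apply, hne]
    rw [Matrix.diag]
    rw [Matrix.diagonal_mul, hdiagK]
    by_cases h : (j : ℕ) < r <;> simp [h]
  rw [hXZ, frob_sq_eq_trace, hexp, htr, Matrix.mul_sub, Matrix.mul_one, Matrix.trace_sub,
    htrS, htrSQ]
  rw [← Finset.sum_sub_distrib]
  refine Finset.sum_congr rfl fun j _ => ?_
  by_cases h : (j : ℕ) < r <;> simp [h]

lemma frame_zero {n₁ n₂ k : ℕ} {V : Matrix (Fin n₂) (Fin k) ℝ} (hV : Vᵀ * V = 1) :
    Frame (0 : Matrix (Fin n₁) (Fin n₂) ℝ) V (fun _ => 0) := by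
  refine ⟨?_, hV, fun _ _ _ => le_refl _, fun _ => le_refl _⟩
  simp [Matrix.diagonal_zero]

lemma tau_vanish {n₁ n₂ : ℕ} {X : Matrix (Fin n₁) (Fin n₂) ℝ}
    {V : Matrix (Fin n₂) (Fin n₂) ℝ} {τ : Fin n₂ → ℝ} (hF : Frame X V τ)
    (m : Fin n₂) (hm : n₁ ≤ (m : ℕ)) : τ m = 0 := by
  have hX : X.rank ≤ (m : ℕ) := le_trans (Matrix.rank_le_height X) hm
  have h0 : Frame (0 : Matrix (Fin n₁) (Fin n₂) ℝ) V (fun _ => 0) := frame_zero hF.2.1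
  have hAB : X = (0 : Matrix (Fin n₁) (Fin n₂) ℝ) + X := by rw [zero_add]
  have hiA : (m : ℕ) + 0 < n₂ := by simpa using m.isLt
  have hiB : 0 < n₂ := lt_of_le_of_lt (Nat.zero_le _) m.isLt
  have := weyl hF h0 hAB hX hiA hiB
  have hnn := hF.2.2.2 m
  have hmm : (⟨(m : ℕ) + 0, hiA⟩ : Fin n₂) = m := by
    ext; simp
  rw [hmm] at this
  exact le_antisymm this hnn

set_option maxHeartbeats 4000000 in
/-- The best rank-`r` approximation `P` of `X` in Frobenius norm is also a best rank-`r`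
approximation of `X` under the partial Frobenius norm `‖·‖_{F,r}`: for every matrix `Y` of
rank at most `r`, `‖X − P‖_{F,r} ≤ ‖X − Y‖_{F,r}`, where the partial Frobenius norms are
expressed through the singular values of `X − P` and `X − Y`. -/
theorem best_rank_approx_partialFro {n₁ n₂ r : ℕ}
    (X P Y : Matrix (Fin n₁) (Fin n₂) ℝ) (hr : r ≤ min n₁ n₂)
    (hPrank : P.rank ≤ r)
    (hPbest : ∀ Z : Matrix (Fin n₁) (Fin n₂) ℝ, Z.rank ≤ r → frob (X - P) ≤ frob (X - Z))
    (hYrank : Y.rank ≤ r)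
    (UP : Matrix (Fin n₁) (Fin (min n₁ n₂)) ℝ) (σP : Fin (min n₁ n₂) → ℝ)
    (VP : Matrix (Fin n₂) (Fin (min n₁ n₂)) ℝ) (hSVDP : IsSVD (X - P) UP σP VP)
    (UY : Matrix (Fin n₁) (Fin (min n₁ n₂)) ℝ) (σY : Fin (min n₁ n₂) → ℝ)
    (VY : Matrix (Fin n₂) (Fin (min n₁ n₂)) ℝ) (hSVDY : IsSVD (X - Y) UY σY VY) :
    Real.sqrt (∑ i : Fin r, (σP (Fin.castLE hr i)) ^ 2) ≤
      Real.sqrt (∑ i : Fin r, (σY (Fin.castLE hr i)) ^ 2) := by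
  classical
  have hsn₂ : (min n₁ n₂) ≤ n₂ := min_le_right _ _
  have hrn₂ : r ≤ n₂ := le_trans hr hsn₂
  have hFP : Frame (X - P) VP σP := frame_of_isSVD hSVDP
  have hFY : Frame (X - Y) VY σY := frame_of_isSVD hSVDY
  obtain ⟨Vx, τ, hFX⟩ := exists_frame X
  -- τ vanishes from index (min n₁ n₂) on
  have hτ0 : ∀ m : Fin n₂, (min n₁ n₂) ≤ (m : ℕ) → τ m = 0 := by
    intro m hm
    have : n₁ ≤ (m : ℕ) := by
      rcases le_or_gt n₁ n₂ with h | h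
      · have : (min n₁ n₂) = n₁ := min_eq_left h
        omega
      · have : (min n₁ n₂) = n₂ := min_eq_right h.le
        have := m.isLt
        omega
    exact tau_vanish hFX m this
  -- padded sequences
  set tfull : ℕ → ℝ := fun m => if h : m < n₂ then τ ⟨m, h⟩ ^ 2 else 0 with htfull
  set tt : ℕ → ℝ := fun j => tfull (r + j) with htt
  set sa : ℕ → ℝ := fun j => if h : j < (min n₁ n₂) then σP ⟨j, h⟩ ^ 2 else 0 with hsa
  set sb : ℕ → ℝ := fun j => if h : j < (min n₁ n₂) then σY ⟨j, h⟩ ^ 2 else 0 with hsb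
  have htt0 : ∀ j, (min n₁ n₂) ≤ j → tt j = 0 := by
    intro j hj
    rw [htt]
    by_cases h : r + j < n₂
    · simp only [htfull, dif_pos h]
      rw [hτ0 ⟨r + j, h⟩ (by simp; omega)]
      simp
    · simp only [htfull, dif_neg h]
  have htt0' : ∀ j, n₂ - r ≤ j → tt j = 0 := by
    intro j hj
    have h : ¬ (r + j < n₂) := by omega
    simp only [htt, htfull, dif_neg h]
  have httnn : ∀ j, 0 ≤ tt j := by
    intro j
    simp only [htt, htfull]
    by_cases h : r + j < n₂ <;> simp [h, sq_nonneg]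
  -- Weyl inequalities
  have hWeylP : ∀ j, tt j ≤ sa j := by
    intro j
    by_cases hj : j < (min n₁ n₂)
    · simp only [hsa]
      rw [dif_pos hj]
      by_cases h : r + j < n₂
      · simp only [htt, htfull, dif_pos h]
        have hAB : X = (X - P) + P := by rw [sub_add_cancel]
        have := weyl hFX hFP hAB hPrank (i := j) h hj
        have h1 : (0:ℝ) ≤ τ ⟨r + j, h⟩ := hFX.2.2.2 _
        exact pow_le_pow_left₀ h1 this 2
      · simp only [htt, htfull, dif_neg h]
        exact sq_nonneg _
    · rw [htt0 j (by omega)]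
      simp only [hsa]
      rw [dif_neg hj]
  have hWeylY : ∀ j, tt j ≤ sb j := by
    intro j
    by_cases hj : j < (min n₁ n₂)
    · simp only [hsb]
      rw [dif_pos hj]
      by_cases h : r + j < n₂
      · simp only [htt, htfull, dif_pos h]
        have hAB : X = (X - Y) + Y := by rw [sub_add_cancel]
        have := weyl hFX hFY hAB hYrank (i := j) h hj
        have h1 : (0:ℝ) ≤ τ ⟨r + j, h⟩ := hFX.2.2.2 _
        exact pow_le_pow_left₀ h1 this 2
      · simp only [htt, htfull, dif_neg h]
        exact sq_nonneg _
    · rw [htt0 j (by omega)]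
      simp only [hsb]
      rw [dif_neg hj]
  -- Eckart–Young
  obtain ⟨Z, hZrank, hZfrob⟩ := frob_truncation hFX hrn₂
  have hEY : ∑ j ∈ Finset.range (min n₁ n₂), sa j ≤ ∑ j ∈ Finset.range (min n₁ n₂), tt j := by
    have e1 : ∑ j ∈ Finset.range (min n₁ n₂), sa j = ∑ i : Fin (min n₁ n₂), σP i ^ 2 := by
      rw [← Fin.sum_univ_eq_sum_range]
      refine Finset.sum_congr rfl fun i _ => ?_
      simp only [hsa]
      rw [dif_pos i.isLt]
    have e2 : frob (X - P) ^ 2 ≤ frob (X - Z) ^ 2 := by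
      have h1 := hPbest Z hZrank
      have h2 : (0:ℝ) ≤ frob (X - P) := Real.sqrt_nonneg _
      exact pow_le_pow_left₀ h2 h1 2
    have e3 : frob (X - P) ^ 2 = ∑ i : Fin (min n₁ n₂), σP i ^ 2 := frame_frob_sq hFP
    -- rewrite the truncation sum
    have e4 : ∑ j : Fin n₂, (if (j : ℕ) < r then 0 else τ j ^ 2)
        = ∑ j ∈ Finset.range (n₂ - r), tt j := by
      have f1 : ∑ j : Fin n₂, (if (j : ℕ) < r then 0 else τ j ^ 2)
          = ∑ m ∈ Finset.range n₂, (if m < r then 0 else tfull m) := by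
        rw [← Fin.sum_univ_eq_sum_range]
        refine Finset.sum_congr rfl fun j _ => ?_
        by_cases h : (j : ℕ) < r
        · simp [h]
        · simp only [if_neg h, htfull, dif_pos j.isLt]
      have f2 : ∑ m ∈ Finset.range n₂, (if m < r then 0 else tfull m)
          = ∑ m ∈ Finset.Ico r n₂, (if m < r then 0 else tfull m) := by
        refine (Finset.sum_subset ?_ ?_).symm
        · intro x hx
          simp only [Finset.mem_Ico] at hx
          simp only [Finset.mem_range]
          omega
        · intro x hx hnx
          simp only [Finset.mem_range] at hx
          simp only [Finset.mem_Ico] at hnx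
          have : x < r := by omega
          simp [this]
      have f3 : ∑ m ∈ Finset.Ico r n₂, (if m < r then 0 else tfull m)
          = ∑ j ∈ Finset.range (n₂ - r), tt j := by
        rw [Finset.sum_Ico_eq_sum_range]
        refine Finset.sum_congr rfl fun j _ => ?_
        have : ¬ (r + j < r) := by omega
        simp only [if_neg this, htt]
      rw [f1, f2, f3]
    have e5 : ∑ j ∈ Finset.range (n₂ - r), tt j = ∑ j ∈ Finset.range n₂, tt j := by
      refine Finset.sum_subset (Finset.range_subset_range.mpr (by omega)) ?_
      intro x hx hnx
      simp only [Finset.mem_range] at hnx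
      exact htt0' x (by omega)
    have e6 : ∑ j ∈ Finset.range (min n₁ n₂), tt j = ∑ j ∈ Finset.range n₂, tt j := by
      refine Finset.sum_subset (Finset.range_subset_range.mpr (by omega)) ?_
      intro x hx hnx
      simp only [Finset.mem_range] at hnx
      exact htt0 x (by omega)
    rw [e1, ← e3, e6, ← e5, ← e4, ← hZfrob]
    exact e2
  -- subtract the tail
  have hsplit : ∀ (f : ℕ → ℝ), ∑ j ∈ Finset.range r, f j + ∑ j ∈ Finset.Ico r (min n₁ n₂), f j
      = ∑ j ∈ Finset.range (min n₁ n₂), f j := by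
    intro f
    simp only [Finset.range_eq_Ico]
    exact Finset.sum_Ico_consecutive f (Nat.zero_le r) hr
  have htail : ∑ j ∈ Finset.Ico r (min n₁ n₂), tt j ≤ ∑ j ∈ Finset.Ico r (min n₁ n₂), sa j :=
    Finset.sum_le_sum fun j _ => hWeylP j
  have hmain : ∑ j ∈ Finset.range r, sa j ≤ ∑ j ∈ Finset.range r, tt j := by
    have h1 := hsplit sa
    have h2 := hsplit tt
    linarith
  have hfinal : ∑ j ∈ Finset.range r, tt j ≤ ∑ j ∈ Finset.range r, sb j :=
    Finset.sum_le_sum fun j _ => hWeylY j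
  -- convert goal
  have g1 : ∑ i : Fin r, (σP (Fin.castLE hr i)) ^ 2 = ∑ j ∈ Finset.range r, sa j := by
    rw [← Fin.sum_univ_eq_sum_range]
    refine Finset.sum_congr rfl fun i _ => ?_
    have hi : (i : ℕ) < (min n₁ n₂) := lt_of_lt_of_le i.isLt hr
    simp only [hsa]
    rw [dif_pos hi]
    rfl
  have g2 : ∑ i : Fin r, (σY (Fin.castLE hr i)) ^ 2 = ∑ j ∈ Finset.range r, sb j := by
    rw [← Fin.sum_univ_eq_sum_range]
    refine Finset.sum_congr rfl fun i _ => ?_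
    have hi : (i : ℕ) < (min n₁ n₂) := lt_of_lt_of_le i.isLt hr
    simp only [hsb]
    rw [dif_pos hi]
    rfl
  rw [g1, g2]
  exact Real.sqrt_le_sqrt (le_trans hmain hfinal)
end

section
/- Let L_star ∈ R^{n₁×r} satisfy L_star = U_star·Σ_star^{1/2}, where U_star has orthonormal columns and Σ_star is an r×r positive diagonal matrix. Let L ∈ R^{n₁×r} with Δ_L := L − L_star, and suppose ‖Δ_L·Σ_star^{-1/2}‖_op < 1. Then L has full column rank and ‖L·(L^T L)^{-1}·Σ_star^{1/2}‖_op ≤ 1/(1 − ‖Δ_L·Σ_star^{-1/2}‖_op). -/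
open Matrix

lemma toELin_mul {a b c : ℕ} (A : Matrix (Fin a) (Fin b) ℝ) (B : Matrix (Fin b) (Fin c) ℝ)
    (x : EuclideanSpace ℝ (Fin c)) :
    Matrix.toEuclideanLin (A * B) x = Matrix.toEuclideanLin A (Matrix.toEuclideanLin B x) := by
  simp [Matrix.toEuclideanLin_apply, Matrix.mulVec_mulVec]

lemma toELin_le {a b : ℕ} (A : Matrix (Fin a) (Fin b) ℝ) (x : EuclideanSpace ℝ (Fin b)) :
    ‖Matrix.toEuclideanLin A x‖ ≤ opNorm A * ‖x‖ := by
  have := (LinearMap.toContinuousLinearMap (Matrix.toEuclideanLin A)).le_opNorm x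
  simpa [opNorm] using this

lemma toELin_adj {a b : ℕ} (A : Matrix (Fin a) (Fin b) ℝ) (x : EuclideanSpace ℝ (Fin b))
    (y : EuclideanSpace ℝ (Fin a)) :
    inner ℝ (Matrix.toEuclideanLin A x) y = (inner ℝ x (Matrix.toEuclideanLin Aᵀ y) : ℝ) := by
  have h : Aᵀ = Aᴴ := by ext i j; simp [Matrix.conjTranspose]
  rw [h, Matrix.toEuclideanLin_conjTranspose_eq_adjoint, LinearMap.adjoint_inner_right]

/-- If `L_star = U_star Σ_star^{1/2}` with `U_star` having orthonormal columns and `Σ_star`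
positive diagonal, and `‖(L − L_star) Σ_star^{-1/2}‖_op < 1`, then `L` has full column rank
and `‖L (Lᵀ L)⁻¹ Σ_star^{1/2}‖_op ≤ 1/(1 − ‖(L − L_star) Σ_star^{-1/2}‖_op)`. -/
theorem opNorm_scaled_pseudoinverse_bound {n₁ r : ℕ}
    (Ustar : Matrix (Fin n₁) (Fin r) ℝ) (σ : Fin r → ℝ)
    (hU : Ustarᵀ * Ustar = 1) (hσ : ∀ i, 0 < σ i)
    (Lstar L : Matrix (Fin n₁) (Fin r) ℝ)
    (hLstar : Lstar = Ustar * Matrix.diagonal (fun i => Real.sqrt (σ i)))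
    (hΔ : opNorm ((L - Lstar) * Matrix.diagonal (fun i => (Real.sqrt (σ i))⁻¹)) < 1) :
    L.rank = r ∧
    opNorm (L * (Lᵀ * L)⁻¹ * Matrix.diagonal (fun i => Real.sqrt (σ i))) ≤
      1 / (1 - opNorm ((L - Lstar) * Matrix.diagonal (fun i => (Real.sqrt (σ i))⁻¹))) := by
  set D := Matrix.diagonal (fun i => Real.sqrt (σ i)) with hD
  set Dinv := Matrix.diagonal (fun i => (Real.sqrt (σ i))⁻¹) with hDi
  have hs : ∀ i, Real.sqrt (σ i) ≠ 0 := fun i => ne_of_gt (Real.sqrt_pos.2 (hσ i))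
  have hDDinv : D * Dinv = 1 := by
    rw [hD, hDi, Matrix.diagonal_mul_diagonal]
    rw [show (fun i => Real.sqrt (σ i) * (Real.sqrt (σ i))⁻¹) = fun _ => (1:ℝ) from
      funext fun i => mul_inv_cancel₀ (hs i), Matrix.diagonal_one]
  have hDinvD : Dinv * D = 1 := by
    rw [hDi, hD, Matrix.diagonal_mul_diagonal]
    rw [show (fun i => (Real.sqrt (σ i))⁻¹ * Real.sqrt (σ i)) = fun _ => (1:ℝ) from
      funext fun i => inv_mul_cancel₀ (hs i), Matrix.diagonal_one]
  set M := L * Dinv with hM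
  have hMD : M * D = L := by rw [hM, Matrix.mul_assoc, hDinvD, Matrix.mul_one]
  have hΔeq : (L - Lstar) * Dinv = M - Ustar := by
    rw [Matrix.sub_mul, hLstar, Matrix.mul_assoc, hDDinv, Matrix.mul_one, hM]
  set ε := opNorm ((L - Lstar) * Dinv) with hε
  have hε0 : 0 ≤ ε := norm_nonneg _
  have h1ε : 0 < 1 - ε := by linarith
  -- U_star preserves norms
  have hUn : ∀ x : EuclideanSpace ℝ (Fin r), ‖Matrix.toEuclideanLin Ustar x‖ = ‖x‖ := by
    intro x
    have h1 : (inner ℝ (Matrix.toEuclideanLin Ustar x) (Matrix.toEuclideanLin Ustar x) : ℝ)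
        = inner ℝ x x := by
      rw [toELin_adj, ← toELin_mul, hU]
      simp [Matrix.toEuclideanLin_apply, Matrix.one_mulVec]
    rw [real_inner_self_eq_norm_sq, real_inner_self_eq_norm_sq] at h1
    have := congrArg Real.sqrt h1
    simpa [Real.sqrt_sq (norm_nonneg _)] using this
  -- lower bound on M
  have hlow : ∀ x : EuclideanSpace ℝ (Fin r),
      (1 - ε) * ‖x‖ ≤ ‖Matrix.toEuclideanLin M x‖ := by
    intro x
    have h2 : Matrix.toEuclideanLin Ustar x =
        Matrix.toEuclideanLin M x - Matrix.toEuclideanLin (M - Ustar) x := by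
      rw [map_sub]; simp
    have h3 : ‖Matrix.toEuclideanLin (M - Ustar) x‖ ≤ ε * ‖x‖ := by
      rw [← hΔeq]; exact toELin_le _ _
    have h4 : ‖x‖ ≤ ‖Matrix.toEuclideanLin M x‖ + ε * ‖x‖ := by
      calc ‖x‖ = ‖Matrix.toEuclideanLin Ustar x‖ := (hUn x).symm
        _ ≤ ‖Matrix.toEuclideanLin M x‖ + ‖Matrix.toEuclideanLin (M - Ustar) x‖ := by
            rw [h2]; exact norm_sub_le _ _
        _ ≤ _ := by linarith
    linarith
  -- injectivity of M on vectors
  have hMv : ∀ v : Fin r → ℝ, M *ᵥ v = 0 → v = 0 := by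
    intro v hv
    have hx : Matrix.toEuclideanLin M ((WithLp.equiv 2 (Fin r → ℝ)).symm v) = 0 := by
      rw [Matrix.toEuclideanLin_apply]
      simp [hv]
    have := hlow ((WithLp.equiv 2 (Fin r → ℝ)).symm v)
    rw [hx, norm_zero] at this
    have hn : ‖(WithLp.equiv 2 (Fin r → ℝ)).symm v‖ = 0 := by
      nlinarith [norm_nonneg ((WithLp.equiv 2 (Fin r → ℝ)).symm v)]
    have h0 : (WithLp.equiv 2 (Fin r → ℝ)).symm v = 0 := norm_eq_zero.mp hn
    simpa using congrArg (WithLp.equiv 2 (Fin r → ℝ)) h0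
  have hLv : ∀ v : Fin r → ℝ, L *ᵥ v = 0 → v = 0 := by
    intro v hv
    rw [← hMD, ← Matrix.mulVec_mulVec] at hv
    have hDv := hMv _ hv
    funext i
    have := congrFun hDv i
    rw [hD] at this
    simp [Matrix.mulVec_diagonal] at this
    rcases this with h | h
    · exact absurd h (hs i)
    · simpa using h
  -- rank
  have hLinj : Function.Injective L.mulVecLin := by
    rw [← LinearMap.ker_eq_bot, LinearMap.ker_eq_bot']
    intro v hv
    exact hLv v hv
  have hrank : L.rank = r := by
    rw [Matrix.rank, LinearMap.finrank_range_of_inj hLinj]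
    simp
  refine ⟨hrank, ?_⟩
  -- MᵀM is a unit
  have hMMv : ∀ v : Fin r → ℝ, (Mᵀ * M) *ᵥ v = 0 → v = 0 := by
    intro v hv
    apply hMv
    have hdot : (M *ᵥ v) ⬝ᵥ (M *ᵥ v) = 0 := by
      have h1 : v ⬝ᵥ ((Mᵀ * M) *ᵥ v) = (M *ᵥ v) ⬝ᵥ (M *ᵥ v) := by
        rw [← Matrix.mulVec_mulVec, Matrix.dotProduct_mulVec, Matrix.vecMul_transpose]
      rw [hv] at h1
      simp at h1
      exact h1.symm
    exact (dotProduct_self_eq_zero).mp hdot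
  have hMMunit : IsUnit (Mᵀ * M) := by
    rw [← Matrix.mulVec_injective_iff_isUnit]
    intro v w h
    have := hMMv (v - w) (by rw [Matrix.mulVec_sub, h, sub_self])
    exact sub_eq_zero.mp this
  have hMMinv : (Mᵀ * M) * (Mᵀ * M)⁻¹ = 1 :=
    Matrix.mul_nonsing_inv _ ((Matrix.isUnit_iff_isUnit_det _).mp hMMunit)
  -- (LᵀL)⁻¹ = Dinv (MᵀM)⁻¹ Dinv
  have hLL : Lᵀ * L = D * (Mᵀ * M) * D := by
    rw [← hMD, Matrix.transpose_mul, Matrix.diagonal_transpose]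
    simp only [Matrix.mul_assoc]; rfl
  have hLLinv : (Lᵀ * L)⁻¹ = Dinv * (Mᵀ * M)⁻¹ * Dinv := by
    apply Matrix.inv_eq_right_inv
    rw [hLL]
    calc D * (Mᵀ * M) * D * (Dinv * (Mᵀ * M)⁻¹ * Dinv)
        = D * (Mᵀ * M) * (D * Dinv) * (Mᵀ * M)⁻¹ * Dinv := by
          simp only [Matrix.mul_assoc]
      _ = D * ((Mᵀ * M) * (Mᵀ * M)⁻¹) * Dinv := by
          rw [hDDinv, Matrix.mul_one]; simp only [Matrix.mul_assoc]
      _ = 1 := by rw [hMMinv, Matrix.mul_one, hDDinv]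
  have hkey : L * (Lᵀ * L)⁻¹ * D = M * (Mᵀ * M)⁻¹ := by
    rw [hLLinv, ← hMD]
    calc M * D * (Dinv * (Mᵀ * M)⁻¹ * Dinv) * D
        = M * (D * Dinv) * (Mᵀ * M)⁻¹ * (Dinv * D) := by simp only [Matrix.mul_assoc]
      _ = M * (Mᵀ * M)⁻¹ := by rw [hDDinv, hDinvD, Matrix.mul_one, Matrix.mul_one]
  rw [hkey, opNorm]
  apply ContinuousLinearMap.opNorm_le_bound _ (by positivity)
  intro y
  simp only [LinearMap.coe_toContinuousLinearMap']
  set x := Matrix.toEuclideanLin (Mᵀ * M)⁻¹ y with hx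
  have hgoalv : Matrix.toEuclideanLin (M * (Mᵀ * M)⁻¹) y = Matrix.toEuclideanLin M x :=
    toELin_mul _ _ _
  have hy : Matrix.toEuclideanLin (Mᵀ * M) x = y := by
    rw [hx, ← toELin_mul, hMMinv]
    simp [Matrix.toEuclideanLin_apply, Matrix.one_mulVec]
  have hinner : (inner ℝ (Matrix.toEuclideanLin M x) (Matrix.toEuclideanLin M x) : ℝ)
      = inner ℝ x y := by
    rw [toELin_adj, ← toELin_mul, hy]
  have hnormsq : ‖Matrix.toEuclideanLin M x‖ ^ 2 ≤ ‖x‖ * ‖y‖ := by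
    rw [real_inner_self_eq_norm_sq] at hinner
    rw [hinner]
    exact real_inner_le_norm x y
  have hxb : (1 - ε) * ‖x‖ ≤ ‖Matrix.toEuclideanLin M x‖ := hlow x
  rw [hgoalv, one_div, ← div_eq_inv_mul, le_div_iff₀ h1ε]
  set t := ‖Matrix.toEuclideanLin M x‖ with ht
  rcases eq_or_lt_of_le (norm_nonneg (Matrix.toEuclideanLin M x)) with h0 | h0
  · rw [← ht] at h0; rw [← h0, zero_mul]; exact norm_nonneg y
  · rw [← ht] at h0
    have key : t * ((1 - ε) * t) ≤ t * ‖y‖ := by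
      calc t * ((1 - ε) * t) = (1 - ε) * t ^ 2 := by ring
        _ ≤ (1 - ε) * (‖x‖ * ‖y‖) := mul_le_mul_of_nonneg_left hnormsq h1ε.le
        _ = ((1 - ε) * ‖x‖) * ‖y‖ := by ring
        _ ≤ t * ‖y‖ := mul_le_mul_of_nonneg_right hxb (norm_nonneg y)
    have := (mul_le_mul_iff_right₀ h0).mp key
    linarith [this]
end

section
/- Let L_star = U_star·Σ_star^{1/2} ∈ R^{n₁×r}, where U_star has orthonormal columns and Σ_star is an r×r positive diagonal matrix. Let L ∈ R^{n₁×r}, Δ_L := L − L_star, and suppose ε := ‖Δ_L·Σ_star^{-1/2}‖_op < 1. Then ‖L·(L^T L)^{-1}·Σ_star^{1/2} − U_star‖_op ≤ √2·ε/(1−ε). -/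
open Matrix
open scoped InnerProductSpace

noncomputable def Tm {n₁ n₂ : ℕ} (A : Matrix (Fin n₁) (Fin n₂) ℝ) :
    EuclideanSpace ℝ (Fin n₂) →L[ℝ] EuclideanSpace ℝ (Fin n₁) :=
  LinearMap.toContinuousLinearMap (Matrix.toEuclideanLin A)

lemma opNorm_def {n₁ n₂ : ℕ} (A : Matrix (Fin n₁) (Fin n₂) ℝ) : opNorm A = ‖Tm A‖ := rfl

lemma opNorm_nonneg' {n₁ n₂ : ℕ} (A : Matrix (Fin n₁) (Fin n₂) ℝ) : 0 ≤ opNorm A :=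
  norm_nonneg _

lemma Tm_le {n₁ n₂ : ℕ} (A : Matrix (Fin n₁) (Fin n₂) ℝ) (x : EuclideanSpace ℝ (Fin n₂)) :
    ‖Tm A x‖ ≤ opNorm A * ‖x‖ := (Tm A).le_opNorm x

lemma opNorm_le_bound' {n₁ n₂ : ℕ} (A : Matrix (Fin n₁) (Fin n₂) ℝ) {c : ℝ} (hc : 0 ≤ c)
    (h : ∀ x, ‖Tm A x‖ ≤ c * ‖x‖) : opNorm A ≤ c :=
  ContinuousLinearMap.opNorm_le_bound _ hc h

lemma Tm_mul {n₁ n₂ n₃ : ℕ} (A : Matrix (Fin n₁) (Fin n₂) ℝ) (B : Matrix (Fin n₂) (Fin n₃) ℝ)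
    (x : EuclideanSpace ℝ (Fin n₃)) : Tm (A * B) x = Tm A (Tm B x) := by
  simp [Tm, Matrix.toEuclideanLin_apply, Matrix.mulVec_mulVec]

lemma Tm_sub {n₁ n₂ : ℕ} (A B : Matrix (Fin n₁) (Fin n₂) ℝ) (x : EuclideanSpace ℝ (Fin n₂)) :
    Tm (A - B) x = Tm A x - Tm B x := by
  simp [Tm, map_sub]

lemma Tm_neg {n₁ n₂ : ℕ} (A : Matrix (Fin n₁) (Fin n₂) ℝ) (x : EuclideanSpace ℝ (Fin n₂)) :
    Tm (-A) x = -(Tm A x) := by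
  simp [Tm, map_neg]

lemma Tm_one {n : ℕ} (x : EuclideanSpace ℝ (Fin n)) : Tm (1 : Matrix (Fin n) (Fin n) ℝ) x = x := by
  simp [Tm, Matrix.toEuclideanLin_apply]

lemma Tm_apply {n₁ n₂ : ℕ} (A : Matrix (Fin n₁) (Fin n₂) ℝ) (x : EuclideanSpace ℝ (Fin n₂)) :
    Tm A x = Matrix.toEuclideanLin A x := by
  rfl

lemma inner_Tm_transpose {n₁ n₂ : ℕ} (A : Matrix (Fin n₁) (Fin n₂) ℝ)
    (x : EuclideanSpace ℝ (Fin n₁)) (y : EuclideanSpace ℝ (Fin n₂)) :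
    ⟪Tm Aᵀ x, y⟫_ℝ = ⟪x, Tm A y⟫_ℝ := by
  simp only [Tm_apply, Matrix.toEuclideanLin_apply, PiLp.inner_apply, RCLike.inner_apply,
    starRingEnd_apply, star_trivial]
  have h1 : ∀ (u : Fin n₁ → ℝ) (v : Fin n₂ → ℝ),
      (∑ i, (Aᵀ *ᵥ u) i * v i) = (Aᵀ *ᵥ u) ⬝ᵥ v := fun _ _ => rfl
  have h2 : ∀ (u : Fin n₁ → ℝ) (v : Fin n₂ → ℝ),
      (∑ i, u i * (A *ᵥ v) i) = u ⬝ᵥ (A *ᵥ v) := fun _ _ => rfl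
  have e1 : ∑ i, y.ofLp i * (Aᵀ *ᵥ x.ofLp) i = y.ofLp ⬝ᵥ (Aᵀ *ᵥ x.ofLp) := rfl
  have e2 : ∑ i, (A *ᵥ y.ofLp) i * x.ofLp i = (A *ᵥ y.ofLp) ⬝ᵥ x.ofLp := rfl
  rw [e1, e2, dotProduct_mulVec, vecMul_transpose]

lemma inner_Tm_transpose' {n₁ n₂ : ℕ} (A : Matrix (Fin n₁) (Fin n₂) ℝ)
    (x : EuclideanSpace ℝ (Fin n₂)) (y : EuclideanSpace ℝ (Fin n₁)) :
    ⟪Tm A x, y⟫_ℝ = ⟪x, Tm Aᵀ y⟫_ℝ := by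
  conv_lhs => rw [← Matrix.transpose_transpose A]
  exact inner_Tm_transpose Aᵀ x y

lemma Tm_add {n₁ n₂ : ℕ} (A B : Matrix (Fin n₁) (Fin n₂) ℝ) (x : EuclideanSpace ℝ (Fin n₂)) :
    Tm (A + B) x = Tm A x + Tm B x := by
  simp [Tm, map_add]

lemma Tm_zero {n₁ n₂ : ℕ} (x : EuclideanSpace ℝ (Fin n₂)) :
    Tm (0 : Matrix (Fin n₁) (Fin n₂) ℝ) x = 0 := by
  simp [Tm, map_zero]

lemma opNorm_neg' {n₁ n₂ : ℕ} (A : Matrix (Fin n₁) (Fin n₂) ℝ) : opNorm (-A) = opNorm A := by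
  have h : Tm (-A) = -(Tm A) := by
    apply ContinuousLinearMap.ext; intro x; rw [Tm_neg]; rfl
  rw [opNorm_def, opNorm_def, h, norm_neg]

lemma le_of_sq_le {a b : ℝ} (ha : 0 ≤ a) (hb : 0 ≤ b) (h : a * a ≤ b * a) : a ≤ b := by
  rcases eq_or_lt_of_le ha with h0 | h0
  · linarith
  · exact le_of_mul_le_mul_right h h0

lemma opNorm_transpose_le {n₁ n₂ : ℕ} (A : Matrix (Fin n₁) (Fin n₂) ℝ) :
    opNorm Aᵀ ≤ opNorm A := by
  refine opNorm_le_bound' _ (opNorm_nonneg' A) (fun x => ?_)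
  refine le_of_sq_le (norm_nonneg _) (mul_nonneg (opNorm_nonneg' A) (norm_nonneg _)) ?_
  have h1 : ‖Tm Aᵀ x‖ * ‖Tm Aᵀ x‖ = ⟪Tm Aᵀ x, Tm Aᵀ x⟫_ℝ :=
    (real_inner_self_eq_norm_mul_norm _).symm
  have h2 : ⟪Tm Aᵀ x, Tm Aᵀ x⟫_ℝ = ⟪x, Tm A (Tm Aᵀ x)⟫_ℝ := inner_Tm_transpose A x _
  have h3 : ⟪x, Tm A (Tm Aᵀ x)⟫_ℝ ≤ ‖x‖ * ‖Tm A (Tm Aᵀ x)‖ := real_inner_le_norm _ _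
  have h4 : ‖Tm A (Tm Aᵀ x)‖ ≤ opNorm A * ‖Tm Aᵀ x‖ := Tm_le A _
  have h5 : 0 ≤ ‖x‖ := norm_nonneg _
  nlinarith [norm_nonneg (Tm Aᵀ x)]

lemma opNorm_transpose {n₁ n₂ : ℕ} (A : Matrix (Fin n₁) (Fin n₂) ℝ) :
    opNorm Aᵀ = opNorm A := by
  refine le_antisymm (opNorm_transpose_le A) ?_
  have := opNorm_transpose_le Aᵀ
  rwa [Matrix.transpose_transpose] at this

lemma opNorm_mul_le {n₁ n₂ n₃ : ℕ} (A : Matrix (Fin n₁) (Fin n₂) ℝ)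
    (B : Matrix (Fin n₂) (Fin n₃) ℝ) : opNorm (A * B) ≤ opNorm A * opNorm B := by
  refine opNorm_le_bound' _ (mul_nonneg (opNorm_nonneg' A) (opNorm_nonneg' B)) (fun x => ?_)
  rw [Tm_mul]
  calc ‖Tm A (Tm B x)‖ ≤ opNorm A * ‖Tm B x‖ := Tm_le A _
    _ ≤ opNorm A * (opNorm B * ‖x‖) :=
        mul_le_mul_of_nonneg_left (Tm_le B x) (opNorm_nonneg' A)
    _ = opNorm A * opNorm B * ‖x‖ := by ring


lemma isUnit_gram {n r : ℕ} (C : Matrix (Fin n) (Fin r) ℝ) {c : ℝ} (hc : 0 < c)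
    (hClow : ∀ x : EuclideanSpace ℝ (Fin r), c * ‖x‖ ≤ ‖Tm C x‖) : IsUnit (Cᵀ * C) := by
  rw [← Matrix.mulVec_injective_iff_isUnit]
  have key : ∀ w : Fin r → ℝ, (Cᵀ * C) *ᵥ w = 0 → w = 0 := by
    intro w hw
    set x : EuclideanSpace ℝ (Fin r) := (WithLp.equiv 2 (Fin r → ℝ)).symm w with hx
    have hTm : Tm (Cᵀ * C) x = 0 := by
      rw [Tm_apply, Matrix.toEuclideanLin_apply, hx, WithLp.equiv_symm_apply, WithLp.ofLp_toLp, hw]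
      simp
    have h1 : ⟪Tm C x, Tm C x⟫_ℝ = 0 := by
      rw [← inner_Tm_transpose C (Tm C x) x, ← Tm_mul, hTm, inner_zero_left]
    have h2 : Tm C x = 0 := by rwa [inner_self_eq_zero] at h1
    have h3 : ‖x‖ = 0 := by
      have := hClow x; rw [h2, norm_zero] at this
      nlinarith [norm_nonneg x]
    have hx0 : x = 0 := norm_eq_zero.mp h3
    have hwx : w = WithLp.equiv 2 (Fin r → ℝ) x := by rw [hx, Equiv.apply_symm_apply]
    rw [hwx, hx0]; simp
  intro u v huv
  have hsub : (Cᵀ * C) *ᵥ (u - v) = 0 := by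
    rw [Matrix.mulVec_sub, huv, sub_self]
  exact sub_eq_zero.mp (key (u - v) hsub)

lemma norm_Tm_orthonormal {n r : ℕ} (U : Matrix (Fin n) (Fin r) ℝ) (hU : Uᵀ * U = 1)
    (x : EuclideanSpace ℝ (Fin r)) : ‖Tm U x‖ = ‖x‖ := by
  have h1 : Tm Uᵀ (Tm U x) = x := by rw [← Tm_mul, hU, Tm_one]
  have h2 : ⟪Tm U x, Tm U x⟫_ℝ = ⟪x, x⟫_ℝ := by
    rw [← inner_Tm_transpose U (Tm U x) x, h1]
  have h3 := real_inner_self_eq_norm_mul_norm (Tm U x)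
  have h4 := real_inner_self_eq_norm_mul_norm x
  nlinarith [norm_nonneg (Tm U x), norm_nonneg x]

lemma Tm_pinv_bound {n r : ℕ} (C D : Matrix (Fin n) (Fin r) ℝ)
    (W : Matrix (Fin r) (Fin r) ℝ) (hDC : D = C * W) (hCtD : Cᵀ * D = 1) {c : ℝ}
    (hc : 0 < c) (hClow : ∀ x : EuclideanSpace ℝ (Fin r), c * ‖x‖ ≤ ‖Tm C x‖) :
    opNorm D ≤ 1 / c := by
  refine opNorm_le_bound' _ (le_of_lt (div_pos one_pos hc)) (fun x => ?_)
  set w := Tm W x with hw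
  have h1 : Tm D x = Tm C w := by rw [hw, ← Tm_mul, ← hDC]
  have h2 : ⟪Tm D x, Tm D x⟫_ℝ = ⟪w, x⟫_ℝ := by
    rw [h1, inner_Tm_transpose' C w (Tm C w), ← h1, ← Tm_mul, hCtD, Tm_one]
  have h3 : ⟪w, x⟫_ℝ ≤ ‖w‖ * ‖x‖ := real_inner_le_norm _ _
  have h4 : c * ‖w‖ ≤ ‖Tm D x‖ := by rw [h1]; exact hClow w
  have h5 : ‖Tm D x‖ * ‖Tm D x‖ = ⟪Tm D x, Tm D x⟫_ℝ :=
    (real_inner_self_eq_norm_mul_norm _).symm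
  rcases eq_or_lt_of_le (norm_nonneg (Tm D x)) with h0 | h0
  · rw [← h0]; positivity
  · rw [div_mul_eq_mul_div, le_div_iff₀ hc]
    nlinarith [norm_nonneg w, norm_nonneg x,
      mul_le_mul_of_nonneg_right h4 (norm_nonneg x)]

lemma opNorm_le_one_symm_idem {n : ℕ} (Q : Matrix (Fin n) (Fin n) ℝ)
    (hQt : Qᵀ = Q) (hQQ : Q * Q = Q) : opNorm Q ≤ 1 := by
  refine opNorm_le_bound' _ zero_le_one (fun x => ?_)
  rw [one_mul]
  refine le_of_sq_le (norm_nonneg _) (norm_nonneg _) ?_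
  have h1 : ‖Tm Q x‖ * ‖Tm Q x‖ = ⟪Tm Q x, Tm Q x⟫_ℝ :=
    (real_inner_self_eq_norm_mul_norm _).symm
  have h2 : ⟪Tm Q x, Tm Q x⟫_ℝ = ⟪x, Tm Q x⟫_ℝ := by
    rw [inner_Tm_transpose' Q x (Tm Q x), ← Tm_mul, hQt, hQQ]
  have h3 : ⟪x, Tm Q x⟫_ℝ ≤ ‖x‖ * ‖Tm Q x‖ := real_inner_le_norm _ _
  calc ‖Tm Q x‖ * ‖Tm Q x‖ = ⟪x, Tm Q x⟫_ℝ := by rw [h1, h2]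
    _ ≤ ‖x‖ * ‖Tm Q x‖ := h3

lemma opNorm_add_orthogonal {n m : ℕ} (A B : Matrix (Fin n) (Fin m) ℝ)
    (hAtB : Aᵀ * B = 0) {a : ℝ} (ha0 : 0 ≤ a) (hA : opNorm A ≤ a) (hB : opNorm B ≤ a) :
    opNorm (A + B) ≤ Real.sqrt 2 * a := by
  refine opNorm_le_bound' _ (by positivity) (fun x => ?_)
  have hsplit : Tm (A + B) x = Tm A x + Tm B x := Tm_add _ _ x
  have horth : ⟪Tm A x, Tm B x⟫_ℝ = 0 := by
    rw [inner_Tm_transpose', ← Tm_mul, hAtB, Tm_zero, inner_zero_right]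
  have hsq2 : ‖Tm (A + B) x‖ ^ 2 = ‖Tm A x‖ ^ 2 + ‖Tm B x‖ ^ 2 := by
    rw [hsplit, norm_add_sq_real, horth]; ring
  have ha' : ‖Tm A x‖ ≤ a * ‖x‖ :=
    le_trans (Tm_le _ x) (mul_le_mul_of_nonneg_right hA (norm_nonneg x))
  have hb' : ‖Tm B x‖ ≤ a * ‖x‖ :=
    le_trans (Tm_le _ x) (mul_le_mul_of_nonneg_right hB (norm_nonneg x))
  have hfin : ‖Tm (A + B) x‖ ^ 2 ≤ 2 * (a * ‖x‖) ^ 2 := by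
    rw [hsq2]; nlinarith [norm_nonneg (Tm A x), norm_nonneg (Tm B x)]
  have h2' : 0 ≤ a * ‖x‖ := by positivity
  calc ‖Tm (A + B) x‖ = Real.sqrt (‖Tm (A + B) x‖ ^ 2) := (Real.sqrt_sq (norm_nonneg _)).symm
    _ ≤ Real.sqrt (2 * (a * ‖x‖) ^ 2) := Real.sqrt_le_sqrt hfin
    _ = Real.sqrt 2 * (a * ‖x‖) := by rw [Real.sqrt_mul (by norm_num), Real.sqrt_sq h2']
    _ = Real.sqrt 2 * a * ‖x‖ := by ring

lemma eps_le_div {ε : ℝ} (h0 : 0 ≤ ε) (h1 : ε < 1) : ε ≤ ε / (1 - ε) := by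
  rw [le_div_iff₀ (by linarith)]
  nlinarith

/-- If `L_star = U_star Σ_star^{1/2}` with `U_star` having orthonormal columns and `Σ_star`
positive diagonal, and `ε := ‖(L − L_star) Σ_star^{-1/2}‖_op < 1`, then
`‖L (Lᵀ L)⁻¹ Σ_star^{1/2} − U_star‖_op ≤ √2 ε/(1 − ε)`. -/
theorem opNorm_scaled_pseudoinverse_minus_U_bound {n₁ r : ℕ}
    (Ustar : Matrix (Fin n₁) (Fin r) ℝ) (σ : Fin r → ℝ)
    (hU : Ustarᵀ * Ustar = 1) (hσ : ∀ i, 0 < σ i)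
    (Lstar L : Matrix (Fin n₁) (Fin r) ℝ)
    (hLstar : Lstar = Ustar * Matrix.diagonal (fun i => Real.sqrt (σ i)))
    (ε : ℝ)
    (hε : ε = opNorm ((L - Lstar) * Matrix.diagonal (fun i => (Real.sqrt (σ i))⁻¹)))
    (hε1 : ε < 1) :
    opNorm (L * (Lᵀ * L)⁻¹ * Matrix.diagonal (fun i => Real.sqrt (σ i)) - Ustar) ≤
      Real.sqrt 2 * ε / (1 - ε) := by
  set S := Matrix.diagonal (fun i => Real.sqrt (σ i)) with hSdef
  set Si := Matrix.diagonal (fun i => (Real.sqrt (σ i))⁻¹) with hSidef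
  set G := (Lᵀ * L)⁻¹ with hGdef
  set Δ := L - Lstar with hΔ
  set E := Δ * Si with hE
  have hsq : ∀ i, Real.sqrt (σ i) ≠ 0 := fun i => ne_of_gt (Real.sqrt_pos.mpr (hσ i))
  have hSSi : S * Si = 1 := by
    have h : (fun i => Real.sqrt (σ i) * (Real.sqrt (σ i))⁻¹) = fun _ => (1:ℝ) :=
      funext fun i => mul_inv_cancel₀ (hsq i)
    rw [hSdef, hSidef, Matrix.diagonal_mul_diagonal, h, Matrix.diagonal_one]
  have hSiS : Si * S = 1 := by
    have h : (fun i => (Real.sqrt (σ i))⁻¹ * Real.sqrt (σ i)) = fun _ => (1:ℝ) :=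
      funext fun i => inv_mul_cancel₀ (hsq i)
    rw [hSdef, hSidef, Matrix.diagonal_mul_diagonal, h, Matrix.diagonal_one]
  have hSt : Sᵀ = S := Matrix.diagonal_transpose _
  have hSit : Siᵀ = Si := Matrix.diagonal_transpose _
  have hε0 : 0 ≤ ε := by rw [hε]; exact opNorm_nonneg' _
  have h1ε : 0 < 1 - ε := by linarith
  -- orthonormal columns
  have hUnorm : ∀ x : EuclideanSpace ℝ (Fin r), ‖Tm Ustar x‖ = ‖x‖ :=
    norm_Tm_orthonormal Ustar hU
  have hUop : opNorm Ustar ≤ 1 :=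
    opNorm_le_bound' _ zero_le_one (fun x => by rw [hUnorm x, one_mul])
  -- C and lower bound
  set C := L * Si with hC
  have hL_eq : L = Lstar + Δ := by rw [hΔ]; abel
  have hLstarSi : Lstar * Si = Ustar := by
    rw [hLstar, Matrix.mul_assoc, hSSi, Matrix.mul_one]
  have hCE : C = Ustar + E := by
    rw [hC, hE]
    conv_lhs => rw [hL_eq]
    rw [Matrix.add_mul, hLstarSi]
  have hClow : ∀ x : EuclideanSpace ℝ (Fin r), (1 - ε) * ‖x‖ ≤ ‖Tm C x‖ := by
    intro x
    have h1 : Tm C x = Tm Ustar x + Tm E x := by rw [← Tm_add, ← hCE]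
    have h2 : ‖Tm E x‖ ≤ ε * ‖x‖ := by
      have := Tm_le E x; rwa [← hε] at this
    have h4 : Tm C x - Tm E x = Tm Ustar x := by rw [h1]; abel
    have h3 : ‖Tm Ustar x‖ ≤ ‖Tm C x‖ + ‖Tm E x‖ := by
      rw [← h4]; exact norm_sub_le _ _
    have h5 := hUnorm x
    linarith
  -- invertibility
  have hCtC_unit : IsUnit (Cᵀ * C) := isUnit_gram C h1ε hClow
  have hSdetU : IsUnit S.det := Matrix.isUnit_det_of_right_inverse hSSi
  have hSunit : IsUnit S := (Matrix.isUnit_iff_isUnit_det S).mpr hSdetU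
  have hLtL_eq : Lᵀ * L = S * (Cᵀ * C) * S := by
    rw [hC, Matrix.transpose_mul, hSit]
    simp only [Matrix.mul_assoc]
    rw [hSiS, Matrix.mul_one, ← Matrix.mul_assoc, hSSi, Matrix.one_mul]
  have hLtL_unit : IsUnit ((Lᵀ * L).det) := by
    have : IsUnit (Lᵀ * L) := by
      rw [hLtL_eq]; exact (hSunit.mul hCtC_unit).mul hSunit
    exact (Matrix.isUnit_iff_isUnit_det _).mp this
  have hG1 : Lᵀ * L * G = 1 := by rw [hGdef]; exact Matrix.mul_nonsing_inv _ hLtL_unit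
  have hG2 : G * (Lᵀ * L) = 1 := by rw [hGdef]; exact Matrix.nonsing_inv_mul _ hLtL_unit
  have hG2' : G * Lᵀ * L = 1 := by rw [Matrix.mul_assoc]; exact hG2
  have hGt : Gᵀ = G := by
    rw [hGdef, Matrix.transpose_nonsing_inv, Matrix.transpose_mul, Matrix.transpose_transpose]
  -- right-assoc cancellation lemmas
  have hG1r : ∀ {k : ℕ} (X : Matrix (Fin r) (Fin k) ℝ), Lᵀ * (L * (G * X)) = X := by
    intro k X; simp only [← Matrix.mul_assoc]; rw [hG1, Matrix.one_mul]
  have hG2r : ∀ {k : ℕ} (X : Matrix (Fin r) (Fin k) ℝ), G * (Lᵀ * (L * X)) = X := by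
    intro k X; simp only [← Matrix.mul_assoc]; rw [hG2', Matrix.one_mul]
  have hSSir : ∀ {k : ℕ} (X : Matrix (Fin r) (Fin k) ℝ), S * (Si * X) = X := by
    intro k X; rw [← Matrix.mul_assoc, hSSi, Matrix.one_mul]
  have hSiSr : ∀ {k : ℕ} (X : Matrix (Fin r) (Fin k) ℝ), Si * (S * X) = X := by
    intro k X; rw [← Matrix.mul_assoc, hSiS, Matrix.one_mul]
  -- the scaled pseudoinverse D
  set D := L * G * S with hD
  have hCtD : Cᵀ * D = 1 := by
    rw [hC, hD, Matrix.transpose_mul, hSit]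
    simp only [Matrix.mul_assoc]
    rw [hG1r, hSiS]
  have hDC : D = C * (S * (G * S)) := by
    rw [hC, hD]
    simp only [Matrix.mul_assoc]
    rw [hSiSr]
  have hDop : opNorm D ≤ 1 / (1 - ε) :=
    Tm_pinv_bound C D (S * (G * S)) hDC hCtD h1ε hClow
  -- the decomposition
  set P1 := L * (G * (Δᵀ * Ustar)) with hP1
  set P2 := L * (G * (Lᵀ * E)) with hP2
  have hLstarT_U : Lstarᵀ * Ustar = S := by
    rw [hLstar, Matrix.transpose_mul, hSt, Matrix.mul_assoc, hU, Matrix.mul_one]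
  have hΔSi : E = L * Si - Ustar := by
    rw [hE, hΔ, Matrix.sub_mul, hLstarSi]
  have hΔtU : Δᵀ * Ustar = Lᵀ * Ustar - S := by
    rw [hΔ, Matrix.transpose_sub, Matrix.sub_mul, hLstarT_U]
  have hsum : Δᵀ * Ustar + Lᵀ * E = Lᵀ * L * Si - S := by
    rw [hΔtU, hΔSi, Matrix.mul_sub, ← Matrix.mul_assoc]
    abel
  have hP12 : P1 + P2 = L * Si - L * (G * S) := by
    rw [hP1, hP2, ← Matrix.mul_add, ← Matrix.mul_add, hsum, Matrix.mul_sub, Matrix.mul_sub]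
    simp only [Matrix.mul_assoc]
    rw [hG2r]
  have hUdecomp : Ustar = L * Si - E := by rw [hΔSi]; abel
  have hdecomp : L * G * S - Ustar = -P1 + (E - P2) := by
    have h9 : P2 = L * Si - L * (G * S) - P1 := by rw [← hP12]; abel
    rw [h9, hUdecomp, Matrix.mul_assoc]
    abel
  -- orthogonality
  have hLtB : Lᵀ * (E - P2) = 0 := by
    rw [Matrix.mul_sub, hP2, hG1r, sub_self]
  have hAtB : (-P1)ᵀ * (E - P2) = 0 := by
    rw [Matrix.transpose_neg, Matrix.neg_mul, hP1, Matrix.transpose_mul, Matrix.transpose_mul]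
    simp only [Matrix.mul_assoc]
    rw [hLtB, Matrix.mul_zero, Matrix.mul_zero, neg_zero]
  -- bound on A = -P1
  have hP1D : P1 = D * (Eᵀ * Ustar) := by
    rw [hP1, hD, hE, Matrix.transpose_mul, hSit]
    simp only [Matrix.mul_assoc]
    rw [hSSir]
  have hEt : opNorm Eᵀ ≤ ε := by rw [opNorm_transpose]; exact hε.symm.le
  have hEU : opNorm (Eᵀ * Ustar) ≤ ε := by
    calc opNorm (Eᵀ * Ustar) ≤ opNorm Eᵀ * opNorm Ustar := opNorm_mul_le _ _
      _ ≤ ε * 1 := mul_le_mul hEt hUop (opNorm_nonneg' _) hε0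
      _ = ε := mul_one ε
  have hAop : opNorm (-P1) ≤ ε / (1 - ε) := by
    rw [opNorm_neg', hP1D]
    calc opNorm (D * (Eᵀ * Ustar)) ≤ opNorm D * opNorm (Eᵀ * Ustar) := opNorm_mul_le _ _
      _ ≤ (1 / (1 - ε)) * ε :=
          mul_le_mul hDop hEU (opNorm_nonneg' _) (le_of_lt (div_pos one_pos h1ε))
      _ = ε / (1 - ε) := by ring
  -- bound on B = E - P2
  set Q := (1 : Matrix (Fin n₁) (Fin n₁) ℝ) - L * (G * Lᵀ) with hQ
  have hQt : Qᵀ = Q := by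
    rw [hQ, Matrix.transpose_sub, Matrix.transpose_one, Matrix.transpose_mul,
      Matrix.transpose_mul, Matrix.transpose_transpose, hGt, Matrix.mul_assoc]
  have hPP : (L * (G * Lᵀ)) * (L * (G * Lᵀ)) = L * (G * Lᵀ) := by
    simp only [Matrix.mul_assoc]
    rw [hG2r]
  have hQQ : Q * Q = Q := by
    rw [hQ, Matrix.sub_mul, Matrix.one_mul, Matrix.mul_sub, Matrix.mul_one, hPP]
    abel
  have hQopN : opNorm Q ≤ 1 := opNorm_le_one_symm_idem Q hQt hQQ
  have hBQE : E - P2 = Q * E := by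
    rw [hQ, hP2, Matrix.sub_mul, Matrix.one_mul]
    simp only [Matrix.mul_assoc]
  have hBop : opNorm (E - P2) ≤ ε / (1 - ε) := by
    rw [hBQE]
    calc opNorm (Q * E) ≤ opNorm Q * opNorm E := opNorm_mul_le _ _
      _ ≤ 1 * ε := mul_le_mul hQopN hε.symm.le (opNorm_nonneg' _) zero_le_one
      _ = ε := one_mul ε
      _ ≤ ε / (1 - ε) := eps_le_div hε0 hε1
  -- conclusion
  rw [hdecomp]
  have hfin := opNorm_add_orthogonal (-P1) (E - P2) hAtB
    (div_nonneg hε0 (le_of_lt h1ε)) hAop hBop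
  calc opNorm (-P1 + (E - P2)) ≤ Real.sqrt 2 * (ε / (1 - ε)) := hfin
    _ = Real.sqrt 2 * ε / (1 - ε) := by ring
end

section
/- Let L_star ∈ R^{n₁×r}, R_star ∈ R^{n₂×r} satisfy L_star = U_star·Σ_star^{1/2} and R_star = V_star·Σ_star^{1/2} with U_star, V_star having orthonormal columns and Σ_star positive diagonal. For any L ∈ R^{n₁×r}, R ∈ R^{n₂×r}, writing Δ_L = L − L_star, Δ_R = R − R_star, and δ := max(‖Δ_L·Σ_star^{-1/2}‖_op, ‖Δ_R·Σ_star^{-1/2}‖_op), one has ‖L·R^T − L_star·R_star^T‖_F ≤ (1 + δ/2)·(‖Δ_L·Σ_star^{1/2}‖_F + ‖Δ_R·Σ_star^{1/2}‖_F). -/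
open Matrix

section Aux

attribute [local instance] Matrix.frobeniusSeminormedAddCommGroup
  Matrix.frobeniusNormedAddCommGroup

lemma frob_eq_norm {n₁ n₂ : ℕ} (A : Matrix (Fin n₁) (Fin n₂) ℝ) : frob A = ‖A‖ := by
  rw [Matrix.frobenius_norm_def, frob, Real.sqrt_eq_rpow]
  congr 1
  refine Finset.sum_congr rfl fun i _ => Finset.sum_congr rfl fun j _ => ?_
  rw [Real.norm_eq_abs, Real.rpow_two, sq_abs]

lemma frob_nonneg {n₁ n₂ : ℕ} (A : Matrix (Fin n₁) (Fin n₂) ℝ) : 0 ≤ frob A :=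
  Real.sqrt_nonneg _

lemma frob_transpose {n₁ n₂ : ℕ} (A : Matrix (Fin n₁) (Fin n₂) ℝ) : frob Aᵀ = frob A := by
  rw [frob_eq_norm, frob_eq_norm, Matrix.frobenius_norm_transpose]

lemma frob_add3_le {n₁ n₂ : ℕ} (A B C : Matrix (Fin n₁) (Fin n₂) ℝ) :
    frob (A + B + C) ≤ frob A + frob B + frob C := by
  simp only [frob_eq_norm]
  calc ‖A + B + C‖ ≤ ‖A + B‖ + ‖C‖ := norm_add_le _ _
  _ ≤ ‖A‖ + ‖B‖ + ‖C‖ := by linarith [norm_add_le A B]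

lemma frob_eq_sqrt_trace {n₁ n₂ : ℕ} (A : Matrix (Fin n₁) (Fin n₂) ℝ) :
    frob A = Real.sqrt (Matrix.trace (A * Aᵀ)) := by
  rw [frob]
  congr 1
  simp [Matrix.trace, Matrix.mul_apply, Matrix.diag, sq]

/-- Frobenius norm is unchanged by right multiplication by `Vᵀ` when `V` has
orthonormal columns. -/
lemma frob_mul_orthT {n₁ n₂ r : ℕ} (A : Matrix (Fin n₁) (Fin r) ℝ)
    (V : Matrix (Fin n₂) (Fin r) ℝ) (hV : Vᵀ * V = 1) : frob (A * Vᵀ) = frob A := by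
  have h : (A * Vᵀ) * (A * Vᵀ)ᵀ = A * Aᵀ := by
    rw [Matrix.transpose_mul, Matrix.transpose_transpose]
    calc A * Vᵀ * (V * Aᵀ) = A * (Vᵀ * V) * Aᵀ := by
          simp only [Matrix.mul_assoc]
    _ = A * Aᵀ := by rw [hV, Matrix.mul_one]
  rw [frob_eq_sqrt_trace, h, ← frob_eq_sqrt_trace]

/-- Operator-norm/Frobenius submultiplicativity. -/
lemma frob_mul_le {n₁ r n₂ : ℕ} (M : Matrix (Fin n₁) (Fin r) ℝ)
    (N : Matrix (Fin r) (Fin n₂) ℝ) : frob (M * N) ≤ opNorm M * frob N := by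
  unfold opNorm
  have hM : 0 ≤ opNorm M := norm_nonneg _
  have key : ∀ j, ∑ i, ((M * N) i j) ^ 2 ≤ opNorm M ^ 2 * ∑ i, (N i j) ^ 2 := by
    intro j
    rw [show opNorm M = ‖LinearMap.toContinuousLinearMap (Matrix.toEuclideanLin M)‖ from rfl]
    have hv := (LinearMap.toContinuousLinearMap (Matrix.toEuclideanLin M)).le_opNorm
        ((WithLp.equiv 2 (Fin r → ℝ)).symm (fun i => N i j))
    have h1 : ‖(LinearMap.toContinuousLinearMap (Matrix.toEuclideanLin M))
        ((WithLp.equiv 2 (Fin r → ℝ)).symm (fun i => N i j))‖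
        = Real.sqrt (∑ i, ((M * N) i j) ^ 2) := by
      rw [LinearMap.coe_toContinuousLinearMap', WithLp.equiv_symm_apply, Matrix.toEuclideanLin_apply_piLp_toLp,
        EuclideanSpace.norm_eq]
      congr 1
      refine Finset.sum_congr rfl fun i _ => ?_
      simp [Matrix.mulVec, Matrix.mul_apply, dotProduct, Real.norm_eq_abs, sq_abs]
    have h2 : ‖(WithLp.equiv 2 (Fin r → ℝ)).symm (fun i => N i j)‖
        = Real.sqrt (∑ i, (N i j) ^ 2) := by
      rw [EuclideanSpace.norm_eq]
      congr 1
      refine Finset.sum_congr rfl fun i _ => ?_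
      simp [Real.norm_eq_abs, sq_abs]
    rw [h1, h2] at hv
    have hA : (0:ℝ) ≤ ∑ i, ((M * N) i j) ^ 2 := by positivity
    have hB : (0:ℝ) ≤ ∑ i, (N i j) ^ 2 := by positivity
    have hsq := mul_self_le_mul_self (Real.sqrt_nonneg (∑ i, ((M * N) i j) ^ 2)) hv
    nlinarith [Real.sq_sqrt hA, Real.sq_sqrt hB]
  calc frob (M * N) = Real.sqrt (∑ j, ∑ i, ((M * N) i j) ^ 2) := by
        rw [frob, Finset.sum_comm]
  _ ≤ Real.sqrt (∑ j, opNorm M ^ 2 * ∑ i, (N i j) ^ 2) :=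
      Real.sqrt_le_sqrt (Finset.sum_le_sum fun j _ => key j)
  _ = Real.sqrt (opNorm M ^ 2 * ∑ j, ∑ i, (N i j) ^ 2) := by rw [← Finset.mul_sum]
  _ = opNorm M * Real.sqrt (∑ j, ∑ i, (N i j) ^ 2) := by
      rw [Real.sqrt_mul (by positivity), Real.sqrt_sq hM]
  _ = opNorm M * frob N := by rw [frob, Finset.sum_comm]

end Aux

/-- With `L_star = U_star Σ_star^{1/2}`, `R_star = V_star Σ_star^{1/2}`, and
`δ = max(‖Δ_L Σ_star^{-1/2}‖_op, ‖Δ_R Σ_star^{-1/2}‖_op)`, we have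
`‖L Rᵀ − L_star R_starᵀ‖_F ≤ (1 + δ/2)(‖Δ_L Σ_star^{1/2}‖_F + ‖Δ_R Σ_star^{1/2}‖_F)`. -/
theorem frob_LRt_sub_bound {n₁ n₂ r : ℕ}
    (Ustar : Matrix (Fin n₁) (Fin r) ℝ) (Vstar : Matrix (Fin n₂) (Fin r) ℝ)
    (σ : Fin r → ℝ) (hU : Ustarᵀ * Ustar = 1) (hV : Vstarᵀ * Vstar = 1)
    (hσ : ∀ i, 0 < σ i)
    (Lstar : Matrix (Fin n₁) (Fin r) ℝ) (Rstar : Matrix (Fin n₂) (Fin r) ℝ)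
    (hLstar : Lstar = Ustar * Matrix.diagonal (fun i => Real.sqrt (σ i)))
    (hRstar : Rstar = Vstar * Matrix.diagonal (fun i => Real.sqrt (σ i)))
    (L : Matrix (Fin n₁) (Fin r) ℝ) (R : Matrix (Fin n₂) (Fin r) ℝ)
    (δ : ℝ)
    (hδ : δ = max (opNorm ((L - Lstar) * Matrix.diagonal (fun i => (Real.sqrt (σ i))⁻¹)))
                  (opNorm ((R - Rstar) * Matrix.diagonal (fun i => (Real.sqrt (σ i))⁻¹)))) :
    frob (L * Rᵀ - Lstar * Rstarᵀ) ≤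
      (1 + δ / 2) * (frob ((L - Lstar) * Matrix.diagonal (fun i => Real.sqrt (σ i))) +
                     frob ((R - Rstar) * Matrix.diagonal (fun i => Real.sqrt (σ i)))) := by
  set D : Matrix (Fin r) (Fin r) ℝ := Matrix.diagonal (fun i => Real.sqrt (σ i)) with hD
  set Dinv : Matrix (Fin r) (Fin r) ℝ := Matrix.diagonal (fun i => (Real.sqrt (σ i))⁻¹)
    with hDinv
  set ΔL : Matrix (Fin n₁) (Fin r) ℝ := L - Lstar with hΔL
  set ΔR : Matrix (Fin n₂) (Fin r) ℝ := R - Rstar with hΔR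
  have hsne : ∀ i, Real.sqrt (σ i) ≠ 0 := fun i =>
    ne_of_gt (Real.sqrt_pos.mpr (hσ i))
  have hDinvD : Dinv * D = 1 := by
    rw [hDinv, hD, Matrix.diagonal_mul_diagonal]
    rw [show (fun i => (Real.sqrt (σ i))⁻¹ * Real.sqrt (σ i)) = fun _ => (1:ℝ) from
      funext fun i => inv_mul_cancel₀ (hsne i)]
    exact Matrix.diagonal_one
  have hDT : Dᵀ = D := Matrix.diagonal_transpose _
  have decomp : L * Rᵀ - Lstar * Rstarᵀ = ΔL * Rstarᵀ + Lstar * ΔRᵀ + ΔL * ΔRᵀ := by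
    simp only [hΔL, hΔR, Matrix.transpose_sub, Matrix.sub_mul, Matrix.mul_sub]
    abel
  -- Term 1
  have h1 : frob (ΔL * Rstarᵀ) = frob (ΔL * D) := by
    rw [hRstar, Matrix.transpose_mul, hDT, ← Matrix.mul_assoc]
    exact frob_mul_orthT (ΔL * D) Vstar hV
  -- Term 2
  have h2 : frob (Lstar * ΔRᵀ) = frob (ΔR * D) := by
    have : Lstar * ΔRᵀ = ((ΔR * D) * Ustarᵀ)ᵀ := by
      rw [hLstar, Matrix.transpose_mul, Matrix.transpose_transpose, Matrix.transpose_mul, hDT,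
        Matrix.mul_assoc]
    rw [this, frob_transpose]
    exact frob_mul_orthT (ΔR * D) Ustar hU
  -- Term 3
  have h3eq : ΔL * ΔRᵀ = (ΔL * Dinv) * (ΔR * D)ᵀ := by
    rw [Matrix.transpose_mul, hDT, Matrix.mul_assoc, ← Matrix.mul_assoc Dinv D, hDinvD,
      Matrix.one_mul]
  have h3eq' : ΔR * ΔLᵀ = (ΔR * Dinv) * (ΔL * D)ᵀ := by
    rw [Matrix.transpose_mul, hDT, Matrix.mul_assoc, ← Matrix.mul_assoc Dinv D, hDinvD,
      Matrix.one_mul]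
  have hδL : opNorm (ΔL * Dinv) ≤ δ := hδ ▸ le_max_left _ _
  have hδR : opNorm (ΔR * Dinv) ≤ δ := hδ ▸ le_max_right _ _
  have h3a : frob (ΔL * ΔRᵀ) ≤ δ * frob (ΔR * D) := by
    rw [h3eq]
    calc frob ((ΔL * Dinv) * (ΔR * D)ᵀ) ≤ opNorm (ΔL * Dinv) * frob ((ΔR * D)ᵀ) :=
          frob_mul_le _ _
    _ = opNorm (ΔL * Dinv) * frob (ΔR * D) := by rw [frob_transpose]
    _ ≤ δ * frob (ΔR * D) := mul_le_mul_of_nonneg_right hδL (frob_nonneg _)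
  have h3b : frob (ΔL * ΔRᵀ) ≤ δ * frob (ΔL * D) := by
    rw [show ΔL * ΔRᵀ = (ΔR * ΔLᵀ)ᵀ by
      rw [Matrix.transpose_mul, Matrix.transpose_transpose], frob_transpose, h3eq']
    calc frob ((ΔR * Dinv) * (ΔL * D)ᵀ) ≤ opNorm (ΔR * Dinv) * frob ((ΔL * D)ᵀ) :=
          frob_mul_le _ _
    _ = opNorm (ΔR * Dinv) * frob (ΔL * D) := by rw [frob_transpose]
    _ ≤ δ * frob (ΔL * D) := mul_le_mul_of_nonneg_right hδR (frob_nonneg _)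
  have htri : frob (L * Rᵀ - Lstar * Rstarᵀ) ≤
      frob (ΔL * Rstarᵀ) + frob (Lstar * ΔRᵀ) + frob (ΔL * ΔRᵀ) := by
    rw [decomp]; exact frob_add3_le _ _ _
  have ha := frob_nonneg (ΔL * D)
  have hb := frob_nonneg (ΔR * D)
  have hc := frob_nonneg (ΔL * ΔRᵀ)
  rw [h1, h2] at htri
  calc frob (L * Rᵀ - Lstar * Rstarᵀ) ≤ frob (ΔL * D) + frob (ΔR * D) + frob (ΔL * ΔRᵀ) :=
        htri
  _ ≤ (1 + δ / 2) * (frob (ΔL * D) + frob (ΔR * D)) := by nlinarith [h3a, h3b]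
end

section
/- Let X_star ∈ R^{n₁×n₂} have rank r with compact SVD X_star = U_star·Σ_star·V_star^T, let L_star = U_star·Σ_star^{1/2}, R_star = V_star·Σ_star^{1/2}. Let F = [L; R] and suppose dist(F, F_star) := inf_{Q ∈ GL(r)} sqrt(‖(LQ − L_star)Σ_star^{1/2}‖_F² + ‖(RQ^{-T} − R_star)Σ_star^{1/2}‖_F²) < σ_r(X_star), where σ_r(X_star) is the smallest nonzero singular value. Then the infimum is attained at some invertible matrix Q ∈ GL(r). -/
open Matrix

/-- The scaled distance `dist(F, F_star)`: the infimum over invertible `Q` of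
`sqrt(‖(LQ − L_star)Σ_star^{1/2}‖_F² + ‖(RQ^{-T} − R_star)Σ_star^{1/2}‖_F²)`,
where `Σ_star = diagonal σ`. -/
noncomputable def distF {n₁ n₂ r : ℕ}
    (L : Matrix (Fin n₁) (Fin r) ℝ) (R : Matrix (Fin n₂) (Fin r) ℝ)
    (Lstar : Matrix (Fin n₁) (Fin r) ℝ) (Rstar : Matrix (Fin n₂) (Fin r) ℝ)
    (σ : Fin r → ℝ) : ℝ :=
  sInf {c : ℝ | ∃ Q : Matrix (Fin r) (Fin r) ℝ, IsUnit Q ∧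
    c = Real.sqrt
      ((frob ((L * Q - Lstar) * Matrix.diagonal (fun i => Real.sqrt (σ i)))) ^ 2 +
       (frob ((R * (Q⁻¹)ᵀ - Rstar) * Matrix.diagonal (fun i => Real.sqrt (σ i)))) ^ 2)}

namespace DistFAux

noncomputable def N {n : ℕ} (v : Fin n → ℝ) : ℝ := Real.sqrt (∑ i, v i ^ 2)

lemma sumsq_nonneg {n : ℕ} (v : Fin n → ℝ) : 0 ≤ ∑ i, v i ^ 2 :=
  Finset.sum_nonneg fun _ _ => sq_nonneg _

lemma N_nonneg {n : ℕ} (v : Fin n → ℝ) : 0 ≤ N v := Real.sqrt_nonneg _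

lemma frob_nonneg {a b : ℕ} (A : Matrix (Fin a) (Fin b) ℝ) : 0 ≤ frob A := Real.sqrt_nonneg _

lemma sq_N {n : ℕ} (v : Fin n → ℝ) : N v ^ 2 = ∑ i, v i ^ 2 := Real.sq_sqrt (sumsq_nonneg v)

lemma abs_le_N {n : ℕ} (v : Fin n → ℝ) (i : Fin n) : |v i| ≤ N v := by
  rw [← Real.sqrt_sq_eq_abs]
  exact Real.sqrt_le_sqrt (Finset.single_le_sum (f := fun j => v j ^ 2)
    (fun j _ => sq_nonneg _) (Finset.mem_univ i))

lemma N_neg {n : ℕ} (v : Fin n → ℝ) : N (-v) = N v := by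
  unfold N; congr 1; apply Finset.sum_congr rfl; intro i _; simp

lemma N_single {n : ℕ} (j : Fin n) : N (Pi.single j (1 : ℝ)) = 1 := by
  unfold N
  simp [Pi.single_apply, ite_pow]

lemma N_mulVec_le {m n : ℕ} (A : Matrix (Fin m) (Fin n) ℝ) (x : Fin n → ℝ) :
    N (A *ᵥ x) ≤ frob A * N x := by
  have h : ∑ i, (A *ᵥ x) i ^ 2 ≤ (∑ i, ∑ j, A i j ^ 2) * ∑ j, x j ^ 2 := by
    calc ∑ i, (A *ᵥ x) i ^ 2 ≤ ∑ i, ((∑ j, A i j ^ 2) * ∑ j, x j ^ 2) := by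
          apply Finset.sum_le_sum; intro i _
          have : (A *ᵥ x) i = ∑ j, A i j * x j := rfl
          rw [this]
          exact Finset.sum_mul_sq_le_sq_mul_sq _ _ _
      _ = _ := by rw [← Finset.sum_mul]
  unfold N frob
  rw [← Real.sqrt_mul (Finset.sum_nonneg fun i _ => sumsq_nonneg (A i) : (0:ℝ) ≤ ∑ i, ∑ j, A i j ^ 2)]
  exact Real.sqrt_le_sqrt h

lemma N_add_le {n : ℕ} (u v : Fin n → ℝ) : N (u + v) ≤ N u + N v := by
  have hcs : ∑ i, u i * v i ≤ N u * N v := by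
    calc ∑ i, u i * v i ≤ |∑ i, u i * v i| := le_abs_self _
      _ = Real.sqrt ((∑ i, u i * v i) ^ 2) := (Real.sqrt_sq_eq_abs _).symm
      _ ≤ Real.sqrt ((∑ i, u i ^ 2) * ∑ i, v i ^ 2) :=
          Real.sqrt_le_sqrt (Finset.sum_mul_sq_le_sq_mul_sq _ _ _)
      _ = N u * N v := Real.sqrt_mul (sumsq_nonneg u) _
  have hexp : ∑ i, (u i + v i) ^ 2
      = (∑ i, u i ^ 2) + 2 * (∑ i, u i * v i) + ∑ i, v i ^ 2 := by
    simp_rw [add_sq, mul_assoc]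
    rw [Finset.sum_add_distrib, Finset.sum_add_distrib, Finset.mul_sum]
  have hle : ∑ i, (u i + v i) ^ 2 ≤ (N u + N v) ^ 2 := by
    have h1 := sq_N u; have h2 := sq_N v
    nlinarith [N_nonneg u, N_nonneg v]
  calc N (u + v) = Real.sqrt (∑ i, (u i + v i) ^ 2) := by unfold N; simp
    _ ≤ Real.sqrt ((N u + N v) ^ 2) := Real.sqrt_le_sqrt hle
    _ = N u + N v := Real.sqrt_sq (add_nonneg (N_nonneg u) (N_nonneg v))

lemma orth_sq {n r : ℕ} (W : Matrix (Fin n) (Fin r) ℝ) (hW : Wᵀ * W = 1) (y : Fin r → ℝ) :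
    ∑ i, (W *ᵥ y) i ^ 2 = ∑ j, y j ^ 2 := by
  have h : (W *ᵥ y) ⬝ᵥ (W *ᵥ y) = y ⬝ᵥ y := by
    rw [Matrix.dotProduct_mulVec, ← Matrix.vecMul_transpose, Matrix.vecMul_vecMul, hW,
      Matrix.vecMul_one]
  simpa [dotProduct, pow_two] using h

/-- Lower bound: if `B` is close in Frobenius norm to `W * diagonal σ` with `W` orthonormal,
then `B` is bounded below as an operator. -/
lemma lb_aux {n r : ℕ} (W : Matrix (Fin n) (Fin r) ℝ) (hW : Wᵀ * W = 1)
    (σ : Fin r → ℝ) (s : ℝ) (hs : 0 ≤ s) (hsle : ∀ i, s ≤ σ i)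
    (B : Matrix (Fin n) (Fin r) ℝ) (d : ℝ)
    (hfr : frob (B - W * Matrix.diagonal σ) ≤ d) (x : Fin r → ℝ) :
    (s - d) * N x ≤ N (B *ᵥ x) := by
  have h1 : s * N x ≤ N ((W * Matrix.diagonal σ) *ᵥ x) := by
    have hsq : s ^ 2 * (∑ j, x j ^ 2) ≤ ∑ i, ((W * Matrix.diagonal σ) *ᵥ x) i ^ 2 := by
      rw [show (W * Matrix.diagonal σ) *ᵥ x = W *ᵥ (Matrix.diagonal σ *ᵥ x) from
        (Matrix.mulVec_mulVec _ _ _).symm]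
      rw [orth_sq W hW]
      rw [Finset.mul_sum]
      apply Finset.sum_le_sum
      intro j _
      have : (Matrix.diagonal σ *ᵥ x) j = σ j * x j := Matrix.mulVec_diagonal _ _ _
      rw [this, mul_pow]
      have h5 := hsle j
      have hns : 0 ≤ (σ j - s) * (σ j + s) * x j ^ 2 :=
        mul_nonneg (mul_nonneg (by linarith) (by linarith)) (sq_nonneg (x j))
      nlinarith [hns]
    calc s * N x = Real.sqrt (s ^ 2 * ∑ j, x j ^ 2) := by
          rw [Real.sqrt_mul (sq_nonneg s), Real.sqrt_sq hs]; rfl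
      _ ≤ Real.sqrt (∑ i, ((W * Matrix.diagonal σ) *ᵥ x) i ^ 2) := Real.sqrt_le_sqrt hsq
      _ = N ((W * Matrix.diagonal σ) *ᵥ x) := rfl
  have h2 : N ((B - W * Matrix.diagonal σ) *ᵥ x) ≤ d * N x :=
    le_trans (N_mulVec_le _ _) (mul_le_mul_of_nonneg_right hfr (N_nonneg x))
  have h3 : (W * Matrix.diagonal σ) *ᵥ x = B *ᵥ x + -((B - W * Matrix.diagonal σ) *ᵥ x) := by
    rw [Matrix.sub_mulVec]; abel
  have h4 : N ((W * Matrix.diagonal σ) *ᵥ x) ≤ N (B *ᵥ x) + d * N x := by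
    rw [h3]
    calc N (B *ᵥ x + -((B - W * Matrix.diagonal σ) *ᵥ x))
        ≤ N (B *ᵥ x) + N (-((B - W * Matrix.diagonal σ) *ᵥ x)) := N_add_le _ _
      _ = N (B *ᵥ x) + N ((B - W * Matrix.diagonal σ) *ᵥ x) := by rw [N_neg]
      _ ≤ N (B *ᵥ x) + d * N x := by linarith
  nlinarith [h1]

end DistFAux

/-- If `dist(F, F_star) < σ_r(X_star)`, then the infimum defining `dist(F, F_star)` is
attained at some invertible matrix `Q`. -/
theorem distF_attained {n₁ n₂ r : ℕ} (hr : 0 < r)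
    (Xstar : Matrix (Fin n₁) (Fin n₂) ℝ)
    (Ustar : Matrix (Fin n₁) (Fin r) ℝ) (Vstar : Matrix (Fin n₂) (Fin r) ℝ)
    (σ : Fin r → ℝ) (hU : Ustarᵀ * Ustar = 1) (hV : Vstarᵀ * Vstar = 1)
    (hσ : ∀ i, 0 < σ i) (hsort : Antitone σ)
    (hX : Xstar = Ustar * Matrix.diagonal σ * Vstarᵀ)
    (Lstar : Matrix (Fin n₁) (Fin r) ℝ) (Rstar : Matrix (Fin n₂) (Fin r) ℝ)
    (hLstar : Lstar = Ustar * Matrix.diagonal (fun i => Real.sqrt (σ i)))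
    (hRstar : Rstar = Vstar * Matrix.diagonal (fun i => Real.sqrt (σ i)))
    (L : Matrix (Fin n₁) (Fin r) ℝ) (R : Matrix (Fin n₂) (Fin r) ℝ)
    (hdist : distF L R Lstar Rstar σ < σ ⟨r - 1, Nat.sub_lt hr one_pos⟩) :
    ∃ Q : Matrix (Fin r) (Fin r) ℝ, IsUnit Q ∧
      distF L R Lstar Rstar σ = Real.sqrt
        ((frob ((L * Q - Lstar) * Matrix.diagonal (fun i => Real.sqrt (σ i)))) ^ 2 +
         (frob ((R * (Q⁻¹)ᵀ - Rstar) * Matrix.diagonal (fun i => Real.sqrt (σ i)))) ^ 2) := by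
  classical
  open DistFAux in
  set D : Matrix (Fin r) (Fin r) ℝ := Matrix.diagonal (fun i => Real.sqrt (σ i)) with hDdef
  set E : Matrix (Fin r) (Fin r) ℝ := Matrix.diagonal (fun i => (Real.sqrt (σ i))⁻¹) with hEdef
  have hσs : ∀ i, 0 < Real.sqrt (σ i) := fun i => Real.sqrt_pos.mpr (hσ i)
  have hDE : D * E = 1 := by
    rw [hDdef, hEdef, Matrix.diagonal_mul_diagonal]
    rw [show (fun i => Real.sqrt (σ i) * (Real.sqrt (σ i))⁻¹) = fun _ : Fin r => (1:ℝ) from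
      funext fun i => mul_inv_cancel₀ (hσs i).ne', Matrix.diagonal_one]
  set f : Matrix (Fin r) (Fin r) ℝ → ℝ := fun Q => Real.sqrt
      ((frob ((L * Q - Lstar) * D)) ^ 2 + (frob ((R * (Q⁻¹)ᵀ - Rstar) * D)) ^ 2) with hfdef
  set S : Set ℝ := {c : ℝ | ∃ Q : Matrix (Fin r) (Fin r) ℝ, IsUnit Q ∧ c = f Q} with hSdef
  have hdistF : distF L R Lstar Rstar σ = sInf S := rfl
  have hne : S.Nonempty := ⟨f 1, 1, isUnit_one, rfl⟩
  have hbdd : BddBelow S := ⟨0, by rintro c ⟨Q, hQ, rfl⟩; exact Real.sqrt_nonneg _⟩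
  set σmin := σ ⟨r - 1, Nat.sub_lt hr one_pos⟩ with hσmindef
  have hminle : ∀ i, σmin ≤ σ i := fun i => hsort (by
    rw [Fin.le_def]; exact Nat.le_sub_one_of_lt i.isLt)
  have hσmin_pos : 0 < σmin := hσ _
  rw [hdistF] at hdist ⊢
  set m := sInf S with hmdef
  set d' := (m + σmin) / 2 with hd'def
  have hm0 : 0 ≤ m := le_csInf hne (by rintro c ⟨Q, hQ, rfl⟩; exact Real.sqrt_nonneg _)
  have hmd' : m < d' := by rw [hd'def]; linarith
  have hd'σ : d' < σmin := by rw [hd'def]; linarith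
  have hcpos : 0 < σmin - d' := by linarith
  have hd'0 : 0 ≤ d' := by linarith
  -- component bounds
  have hcomp : ∀ Q : Matrix (Fin r) (Fin r) ℝ, f Q ≤ d' →
      frob ((L * Q - Lstar) * D) ≤ d' ∧ frob ((R * (Q⁻¹)ᵀ - Rstar) * D) ≤ d' := by
    intro Q hQ
    constructor
    · calc frob ((L * Q - Lstar) * D)
          = Real.sqrt ((frob ((L * Q - Lstar) * D)) ^ 2) :=
            (Real.sqrt_sq (DistFAux.frob_nonneg _)).symm
        _ ≤ f Q := Real.sqrt_le_sqrt (le_add_of_nonneg_right (sq_nonneg _))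
        _ ≤ d' := hQ
    · calc frob ((R * (Q⁻¹)ᵀ - Rstar) * D)
          = Real.sqrt ((frob ((R * (Q⁻¹)ᵀ - Rstar) * D)) ^ 2) :=
            (Real.sqrt_sq (DistFAux.frob_nonneg _)).symm
        _ ≤ f Q := Real.sqrt_le_sqrt (le_add_of_nonneg_left (sq_nonneg _))
        _ ≤ d' := hQ
  have hLD : Lstar * D = Ustar * Matrix.diagonal σ := by
    rw [hLstar, Matrix.mul_assoc, hDdef, Matrix.diagonal_mul_diagonal,
      show (fun i => Real.sqrt (σ i) * Real.sqrt (σ i)) = σ from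
        funext fun i => Real.mul_self_sqrt (hσ i).le]
  have hRD : Rstar * D = Vstar * Matrix.diagonal σ := by
    rw [hRstar, Matrix.mul_assoc, hDdef, Matrix.diagonal_mul_diagonal,
      show (fun i => Real.sqrt (σ i) * Real.sqrt (σ i)) = σ from
        funext fun i => Real.mul_self_sqrt (hσ i).le]
  -- lower bounds
  have hlbL : ∀ Q : Matrix (Fin r) (Fin r) ℝ, f Q ≤ d' → ∀ x : Fin r → ℝ,
      (σmin - d') * DistFAux.N x ≤ DistFAux.N ((L * Q * D) *ᵥ x) := by
    intro Q hQ x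
    have hsub : L * Q * D - Ustar * Matrix.diagonal σ = (L * Q - Lstar) * D := by
      rw [Matrix.sub_mul, hLD]
    exact DistFAux.lb_aux Ustar hU σ σmin hσmin_pos.le hminle (L * Q * D) d'
      (by rw [hsub]; exact (hcomp Q hQ).1) x
  have hlbR : ∀ Q : Matrix (Fin r) (Fin r) ℝ, f Q ≤ d' → ∀ x : Fin r → ℝ,
      (σmin - d') * DistFAux.N x ≤ DistFAux.N ((R * (Q⁻¹)ᵀ * D) *ᵥ x) := by
    intro Q hQ x
    have hsub : R * (Q⁻¹)ᵀ * D - Vstar * Matrix.diagonal σ = (R * (Q⁻¹)ᵀ - Rstar) * D := by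
      rw [Matrix.sub_mul, hRD]
    exact DistFAux.lb_aux Vstar hV σ σmin hσmin_pos.le hminle (R * (Q⁻¹)ᵀ * D) d'
      (by rw [hsub]; exact (hcomp Q hQ).2) x
  set Mb := frob D * (frob L + frob R) / (σmin - d') with hMbdef
  -- entry bound for Q⁻¹
  have hboundInv : ∀ Q : Matrix (Fin r) (Fin r) ℝ, IsUnit Q → f Q ≤ d' →
      ∀ i j, |Q⁻¹ i j| ≤ Mb := by
    intro Q hQu hQ i j
    have hdet : IsUnit Q.det := (Matrix.isUnit_iff_isUnit_det Q).mp hQu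
    have hQQ : Q * Q⁻¹ = 1 := Matrix.mul_nonsing_inv Q hdet
    set y : Fin r → ℝ := Pi.single j 1 with hy
    set x : Fin r → ℝ := (E * Q⁻¹) *ᵥ y with hx
    have hDEQ : D * (E * Q⁻¹) = Q⁻¹ := by rw [← Matrix.mul_assoc, hDE, Matrix.one_mul]
    have h1 : (L * Q * D) *ᵥ x = L *ᵥ y := by
      rw [hx, Matrix.mulVec_mulVec]
      congr 1
      rw [Matrix.mul_assoc (L * Q) D (E * Q⁻¹), hDEQ, Matrix.mul_assoc, hQQ, Matrix.mul_one]
    have h2 : (σmin - d') * DistFAux.N x ≤ frob L := by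
      calc (σmin - d') * DistFAux.N x ≤ DistFAux.N ((L * Q * D) *ᵥ x) := hlbL Q hQ x
        _ = DistFAux.N (L *ᵥ y) := by rw [h1]
        _ ≤ frob L * DistFAux.N y := DistFAux.N_mulVec_le _ _
        _ = frob L := by rw [hy, DistFAux.N_single, mul_one]
    have hx_le : DistFAux.N x ≤ frob L / (σmin - d') := by
      rw [le_div_iff₀ hcpos, mul_comm]; exact h2
    have h3 : Q⁻¹ *ᵥ y = D *ᵥ x := by rw [hx, Matrix.mulVec_mulVec, hDEQ]
    have h4 : |Q⁻¹ i j| ≤ DistFAux.N (Q⁻¹ *ᵥ y) := by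
      have he : (Q⁻¹ *ᵥ y) i = Q⁻¹ i j := by rw [hy]; simp [Matrix.mulVec_single]
      rw [← he]; exact DistFAux.abs_le_N _ i
    calc |Q⁻¹ i j| ≤ DistFAux.N (Q⁻¹ *ᵥ y) := h4
      _ = DistFAux.N (D *ᵥ x) := by rw [h3]
      _ ≤ frob D * DistFAux.N x := DistFAux.N_mulVec_le _ _
      _ ≤ frob D * (frob L / (σmin - d')) :=
          mul_le_mul_of_nonneg_left hx_le (DistFAux.frob_nonneg _)
      _ ≤ Mb := by
          rw [hMbdef, mul_div_assoc]
          gcongr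
          · exact DistFAux.frob_nonneg _
          · linarith [DistFAux.frob_nonneg R]
  -- entry bound for Q
  have hboundQ : ∀ Q : Matrix (Fin r) (Fin r) ℝ, IsUnit Q → f Q ≤ d' →
      ∀ i j, |Q i j| ≤ Mb := by
    intro Q hQu hQ i j
    have hdet : IsUnit Q.det := (Matrix.isUnit_iff_isUnit_det Q).mp hQu
    have hQQ : Q * Q⁻¹ = 1 := Matrix.mul_nonsing_inv Q hdet
    have hIT : (Q⁻¹)ᵀ * Qᵀ = 1 := by rw [← Matrix.transpose_mul, hQQ, Matrix.transpose_one]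
    set y : Fin r → ℝ := Pi.single i 1 with hy
    set x : Fin r → ℝ := (E * Qᵀ) *ᵥ y with hx
    have hDEQ : D * (E * Qᵀ) = Qᵀ := by rw [← Matrix.mul_assoc, hDE, Matrix.one_mul]
    have h1 : (R * (Q⁻¹)ᵀ * D) *ᵥ x = R *ᵥ y := by
      rw [hx, Matrix.mulVec_mulVec]
      congr 1
      rw [Matrix.mul_assoc (R * (Q⁻¹)ᵀ) D (E * Qᵀ), hDEQ, Matrix.mul_assoc, hIT, Matrix.mul_one]
    have h2 : (σmin - d') * DistFAux.N x ≤ frob R := by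
      calc (σmin - d') * DistFAux.N x ≤ DistFAux.N ((R * (Q⁻¹)ᵀ * D) *ᵥ x) := hlbR Q hQ x
        _ = DistFAux.N (R *ᵥ y) := by rw [h1]
        _ ≤ frob R * DistFAux.N y := DistFAux.N_mulVec_le _ _
        _ = frob R := by rw [hy, DistFAux.N_single, mul_one]
    have hx_le : DistFAux.N x ≤ frob R / (σmin - d') := by
      rw [le_div_iff₀ hcpos, mul_comm]; exact h2
    have h3 : Qᵀ *ᵥ y = D *ᵥ x := by rw [hx, Matrix.mulVec_mulVec, hDEQ]
    have h4 : |Q i j| ≤ DistFAux.N (Qᵀ *ᵥ y) := by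
      have he : (Qᵀ *ᵥ y) j = Q i j := by rw [hy]; simp [Matrix.mulVec_single]
      rw [← he]; exact DistFAux.abs_le_N _ j
    calc |Q i j| ≤ DistFAux.N (Qᵀ *ᵥ y) := h4
      _ = DistFAux.N (D *ᵥ x) := by rw [h3]
      _ ≤ frob D * DistFAux.N x := DistFAux.N_mulVec_le _ _
      _ ≤ frob D * (frob R / (σmin - d')) :=
          mul_le_mul_of_nonneg_left hx_le (DistFAux.frob_nonneg _)
      _ ≤ Mb := by
          rw [hMbdef, mul_div_assoc]
          gcongr
          · exact DistFAux.frob_nonneg _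
          · linarith [DistFAux.frob_nonneg L]
  -- the continuous surrogate on pairs
  set h : Matrix (Fin r) (Fin r) ℝ × Matrix (Fin r) (Fin r) ℝ → ℝ := fun p =>
    Real.sqrt ((frob ((L * p.1 - Lstar) * D)) ^ 2 + (frob ((R * p.2ᵀ - Rstar) * D)) ^ 2)
    with hhdef
  have hfrobCont : ∀ a b : ℕ, Continuous (fun A : Matrix (Fin a) (Fin b) ℝ => frob A) := by
    intro a b
    unfold frob
    apply Real.continuous_sqrt.comp
    apply continuous_finset_sum; intro i _
    apply continuous_finset_sum; intro j _
    exact (continuous_id.matrix_elem i j).pow 2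
  have hhcont : Continuous h := by
    rw [hhdef]
    apply Real.continuous_sqrt.comp
    apply Continuous.add
    · exact (((hfrobCont n₁ r).comp
        (((continuous_const.matrix_mul continuous_fst).sub continuous_const).matrix_mul
          continuous_const))).pow 2
    · exact (((hfrobCont n₂ r).comp
        (((continuous_const.matrix_mul continuous_snd.matrix_transpose).sub
          continuous_const).matrix_mul continuous_const))).pow 2
  have hhf : ∀ p : Matrix (Fin r) (Fin r) ℝ × Matrix (Fin r) (Fin r) ℝ,
      p.1 * p.2 = 1 → h p = f p.1 := by
    intro p hp
    rw [hhdef, hfdef]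
    simp only
    rw [Matrix.inv_eq_right_inv hp]
  -- the compact set
  set C : Set (Matrix (Fin r) (Fin r) ℝ × Matrix (Fin r) (Fin r) ℝ) :=
    {p | p.1 * p.2 = 1 ∧ (∀ i j, |p.1 i j| ≤ Mb) ∧ (∀ i j, |p.2 i j| ≤ Mb)} with hCdef
  have hCclosed : IsClosed C := by
    rw [hCdef]
    rw [Set.setOf_and, Set.setOf_and]
    refine IsClosed.inter ?_ (IsClosed.inter ?_ ?_)
    · exact isClosed_eq (continuous_fst.matrix_mul continuous_snd) continuous_const
    · have hrw : {p : Matrix (Fin r) (Fin r) ℝ × Matrix (Fin r) (Fin r) ℝ |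
          ∀ i j, |p.1 i j| ≤ Mb} = ⋂ i, ⋂ j, {p | |p.1 i j| ≤ Mb} := by ext p; simp
      rw [hrw]
      exact isClosed_iInter fun i => isClosed_iInter fun j =>
        isClosed_le ((continuous_fst.matrix_elem i j).abs) continuous_const
    · have hrw : {p : Matrix (Fin r) (Fin r) ℝ × Matrix (Fin r) (Fin r) ℝ |
          ∀ i j, |p.2 i j| ≤ Mb} = ⋂ i, ⋂ j, {p | |p.2 i j| ≤ Mb} := by ext p; simp
      rw [hrw]
      exact isClosed_iInter fun i => isClosed_iInter fun j =>
        isClosed_le ((continuous_snd.matrix_elem i j).abs) continuous_const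
  have hCcompact : IsCompact C := by
    have hB : IsCompact {A : Matrix (Fin r) (Fin r) ℝ | ∀ i j, A i j ∈ Set.Icc (-Mb) Mb} := by
      have hrw : {A : Matrix (Fin r) (Fin r) ℝ | ∀ i j, A i j ∈ Set.Icc (-Mb) Mb}
          = Set.univ.pi (fun _ : Fin r => Set.univ.pi fun _ : Fin r => Set.Icc (-Mb) Mb) := by
        ext A
        exact ⟨fun hA => Set.mem_pi.mpr fun i _ => Set.mem_pi.mpr fun j _ => hA i j,
          fun hA i j => Set.mem_pi.mp (Set.mem_pi.mp hA i (Set.mem_univ i)) j (Set.mem_univ j)⟩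
      rw [hrw]
      exact isCompact_univ_pi fun i => isCompact_univ_pi fun j => isCompact_Icc
    apply IsCompact.of_isClosed_subset (hB.prod hB) hCclosed
    rintro p ⟨h1, h2, h3⟩
    exact Set.mem_prod.mpr ⟨fun i j => Set.mem_Icc.mpr (abs_le.mp (h2 i j)),
      fun i j => Set.mem_Icc.mpr (abs_le.mp (h3 i j))⟩
  -- C is nonempty
  obtain ⟨c₀, hc₀S, hc₀lt⟩ := exists_lt_of_csInf_lt hne (show sInf S < d' from hmd')
  obtain ⟨Q₁, hQ₁u, hc₀eq⟩ := hc₀S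
  have hfQ₁ : f Q₁ ≤ d' := by rw [← hc₀eq]; exact hc₀lt.le
  have hQ₁QQ : Q₁ * Q₁⁻¹ = 1 :=
    Matrix.mul_nonsing_inv Q₁ ((Matrix.isUnit_iff_isUnit_det Q₁).mp hQ₁u)
  have hQ₁mem : (Q₁, Q₁⁻¹) ∈ C :=
    ⟨hQ₁QQ, hboundQ Q₁ hQ₁u hfQ₁, hboundInv Q₁ hQ₁u hfQ₁⟩
  obtain ⟨p₀, hp₀C, hp₀min⟩ := hCcompact.exists_isMinOn ⟨_, hQ₁mem⟩ hhcont.continuousOn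
  have hp₀1 : p₀.1 * p₀.2 = 1 := hp₀C.1
  have hp₀u : IsUnit p₀.1 := by
    apply (Matrix.isUnit_iff_isUnit_det p₀.1).mpr
    have hdet := congrArg Matrix.det hp₀1
    rw [Matrix.det_mul, Matrix.det_one] at hdet
    exact IsUnit.of_mul_eq_one _ hdet
  have hhp₀ : h p₀ = f p₀.1 := hhf p₀ hp₀1
  refine ⟨p₀.1, hp₀u, ?_⟩
  have hfS : f p₀.1 ∈ S := ⟨p₀.1, hp₀u, rfl⟩
  have hle1 : m ≤ f p₀.1 := csInf_le hbdd hfS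
  have hle2 : f p₀.1 ≤ m := by
    apply le_csInf hne
    rintro s ⟨Q', hQ'u, rfl⟩
    by_cases hcase : f Q' ≤ d'
    · have hQ'QQ : Q' * Q'⁻¹ = 1 :=
        Matrix.mul_nonsing_inv Q' ((Matrix.isUnit_iff_isUnit_det Q').mp hQ'u)
      have hmem : (Q', Q'⁻¹) ∈ C :=
        ⟨hQ'QQ, hboundQ Q' hQ'u hcase, hboundInv Q' hQ'u hcase⟩
      have hmin := isMinOn_iff.mp hp₀min _ hmem
      have heq : h (Q', Q'⁻¹) = f Q' := hhf _ hQ'QQ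
      linarith [hhp₀]
    · push_neg at hcase
      have h1 := isMinOn_iff.mp hp₀min _ hQ₁mem
      have heq : h (Q₁, Q₁⁻¹) = f Q₁ := hhf _ hQ₁QQ
      linarith [hhp₀, hfQ₁]
  exact le_antisymm hle1 hle2
end

section
/- Let S_star ∈ R^{n₁×n₂} have at most α·n₂ nonzero entries per row and at most α·n₁ nonzero entries per column. Given any matrix D ∈ R^{n₁×n₂}, let S = T_{2α}[S_star + D] be the matrix obtained by keeping, in each entry position (i,j), the value (S_star+D)_{i,j} if and only if |S_star+D|_{i,j} is simultaneously among the top 2α·n₂ largest magnitudes in its row and the top 2α·n₁ largest magnitudes in its column (setting it to 0 otherwise). Then ‖S − S_star‖_∞ ≤ 2‖D‖_∞. -/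
open Matrix

/-- The largest absolute value of an entry of a matrix. -/
noncomputable def entrywiseSup {n₁ n₂ : ℕ} (A : Matrix (Fin n₁) (Fin n₂) ℝ) : ℝ :=
  ⨆ i, ⨆ j, |A i j|

/-- The `k`-th largest element in magnitude of a finite family of reals
(with the convention that it is `0` when out of range). -/
noncomputable def kthLargestAbs {n : ℕ} (v : Fin n → ℝ) (k : ℕ) : ℝ :=
  (((List.ofFn v).map (fun x => |x|)).insertionSort (· ≥ ·)).getD (k - 1) 0

lemma card_filter_eq_countP (n : ℕ) (P : Fin n → Prop) [DecidablePred P] :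
    (Finset.univ.filter P).card = (List.finRange n).countP (fun j => decide (P j)) := by
  rw [Fin.univ_def]
  simp [Finset.filter, Finset.card, Multiset.filter_coe, List.countP_eq_length_filter]

/-- At least `k` entries have magnitude at least the `k`-th largest magnitude. -/
lemma kth_count {n : ℕ} (v : Fin n → ℝ) (k : ℕ) (hk1 : 1 ≤ k) (hkn : k ≤ n) :
    k ≤ (Finset.univ.filter (fun j => kthLargestAbs v k ≤ |v j|)).card := by
  classical
  set l : List ℝ := (List.ofFn v).map (fun x => |x|) with hl
  set L : List ℝ := l.insertionSort (· ≥ ·) with hL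
  have hlen : L.length = n := by
    simp [hL, hl, List.length_insertionSort]
  have hk' : k - 1 < L.length := by omega
  set t : ℝ := kthLargestAbs v k with htdef
  have ht : t = L[k-1] := by
    rw [htdef]
    exact List.getD_eq_getElem L 0 hk'
  have hsorted : L.Pairwise (· ≥ ·) := List.pairwise_insertionSort _ _
  -- all elements of L.take k are ≥ t
  have htake : ∀ a ∈ L.take k, decide (t ≤ a) = true := by
    intro a ha
    rw [List.mem_iff_getElem] at ha
    obtain ⟨i, hi, rfl⟩ := ha
    rw [List.getElem_take]
    have hilen : i < L.length := by
      have := hi; simp [List.length_take, hlen] at this; omega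
    have hik : i ≤ k - 1 := by
      have := hi; simp [List.length_take, hlen] at this; omega
    simp only [decide_eq_true_eq, ht]
    exact hsorted.rel_get_of_le (a := ⟨i, hilen⟩) (b := ⟨k-1, hk'⟩) hik
  have hcount : k ≤ L.countP (fun x => decide (t ≤ x)) := by
    have h1 : (L.take k).countP (fun x => decide (t ≤ x)) = (L.take k).length :=
      List.countP_eq_length.2 htake
    have h2 : (L.take k).length = k := by simp [List.length_take, hlen, hkn]
    calc k = (L.take k).countP (fun x => decide (t ≤ x)) := by rw [h1, h2]
    _ ≤ L.countP (fun x => decide (t ≤ x)) := by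
        conv_rhs => rw [← List.take_append_drop k L]
        rw [List.countP_append]; omega
  have hperm : L.countP (fun x => decide (t ≤ x)) = l.countP (fun x => decide (t ≤ x)) :=
    (List.perm_insertionSort _ _).countP_eq _
  have hl2 : l.countP (fun x => decide (t ≤ x))
      = (List.finRange n).countP (fun j => decide (t ≤ |v j|)) := by
    rw [hl, List.ofFn_eq_map, List.map_map, List.countP_map]
    rfl
  rw [card_filter_eq_countP]
  omega

/-- Key pigeonhole step: if an entry of `s` is nonzero but the corresponding entry of
`s + d` is below the `k`-th largest magnitude, where `k` is at least twice the number of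
nonzero entries of `s`, then `|s j| ≤ 2 E` for any entrywise bound `E` on `d`. -/
lemma key_step {n : ℕ} (s d : Fin n → ℝ) (E : ℝ) (hE : ∀ j', |d j'| ≤ E) {j : Fin n} (k : ℕ)
    (hk : 2 * (Finset.univ.filter (fun j' => s j' ≠ 0)).card ≤ k)
    (hj : s j ≠ 0)
    (hlt : |s j + d j| < kthLargestAbs (fun j' => s j' + d j') k) :
    |s j| ≤ 2 * E := by
  classical
  set r := (Finset.univ.filter (fun j' => s j' ≠ 0)).card with hr
  have hr1 : 1 ≤ r := Finset.card_pos.2 ⟨j, by simp [hj]⟩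
  set v : Fin n → ℝ := fun j' => s j' + d j' with hv
  set t := kthLargestAbs v k with htdef
  by_cases hkn : k ≤ n
  · have hcard : k ≤ (Finset.univ.filter (fun j' => t ≤ |v j'|)).card :=
      kth_count v k (by omega) hkn
    have hsub : ¬ (Finset.univ.filter (fun j' => t ≤ |v j'|)) ⊆
        (Finset.univ.filter (fun j' => s j' ≠ 0)) := by
      intro hsub
      have := Finset.card_le_card hsub
      omega
    rw [Finset.not_subset] at hsub
    obtain ⟨j', hj'1, hj'2⟩ := hsub
    simp only [Finset.mem_filter, Finset.mem_univ, true_and, not_not] at hj'1 hj'2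
    have hvj' : v j' = d j' := by simp [hv, hj'2]
    have htE : t ≤ E := by
      calc t ≤ |v j'| := hj'1
      _ = |d j'| := by rw [hvj']
      _ ≤ E := hE j'
    have h1 : |s j| ≤ |s j + d j| + |d j| := by
      calc |s j| = |(s j + d j) + (-(d j))| := by ring_nf
      _ ≤ |s j + d j| + |(-(d j))| := abs_add_le _ _
      _ = |s j + d j| + |d j| := by rw [abs_neg]
    have := hE j
    linarith
  · exfalso
    have hlen : (((List.ofFn v).map (fun x => |x|)).insertionSort (· ≥ ·)).length = n := by
      simp [List.length_insertionSort]
    have ht0 : t = 0 := by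
      rw [htdef, kthLargestAbs, List.getD_eq_default]
      omega
    have h0 : (0:ℝ) ≤ |s j + d j| := abs_nonneg _
    linarith

/-- If `S_star` has at most `α n₂` (resp. `α n₁`) nonzero entries per row (resp. column),
and `S = T_{2α}[S_star + D]` keeps an entry of `S_star + D` iff its magnitude is among the
top `2α n₂` in its row and the top `2α n₁` in its column, then
`‖S − S_star‖_∞ ≤ 2 ‖D‖_∞`. -/
theorem hard_thresholding_entrywise_bound {n₁ n₂ : ℕ} (α : ℝ) (hα0 : 0 ≤ α)
    (Sstar D S M : Matrix (Fin n₁) (Fin n₂) ℝ)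
    (hM : M = Sstar + D)
    (hrow : ∀ i, ((Finset.univ.filter (fun j => Sstar i j ≠ 0)).card : ℝ) ≤ α * n₂)
    (hcol : ∀ j, ((Finset.univ.filter (fun i => Sstar i j ≠ 0)).card : ℝ) ≤ α * n₁)
    (hS : ∀ i j, S i j =
      if |M i j| ≥ kthLargestAbs (fun j' => M i j') ⌈2 * α * n₂⌉₊ ∧
         |M i j| ≥ kthLargestAbs (fun i' => M i' j) ⌈2 * α * n₁⌉₊
      then M i j else 0) :
    entrywiseSup (S - Sstar) ≤ 2 * entrywiseSup D := by
  classical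
  set E := entrywiseSup D with hEdef
  -- entrywise bound on D
  have hDle : ∀ a b, |D a b| ≤ E := by
    intro a b
    have h1 : |D a b| ≤ ⨆ j, |D a j| :=
      le_ciSup (f := fun j => |D a j|) (Set.Finite.bddAbove (Set.finite_range _)) b
    have h2 : (⨆ j, |D a j|) ≤ ⨆ i, ⨆ j, |D i j| :=
      le_ciSup (f := fun i => ⨆ j, |D i j|) (Set.Finite.bddAbove (Set.finite_range _)) a
    exact h1.trans h2
  have hE0 : 0 ≤ E := by
    rcases isEmpty_or_nonempty (Fin n₁) with h1 | h1
    · rw [hEdef, entrywiseSup, Real.iSup_of_isEmpty]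
    rcases isEmpty_or_nonempty (Fin n₂) with h2 | h2
    · have : ∀ i : Fin n₁, (⨆ j, |D i j|) = 0 := fun i => Real.iSup_of_isEmpty _
      simp only [hEdef, entrywiseSup]
      simp [this]
    · obtain ⟨a⟩ := h1; obtain ⟨b⟩ := h2
      exact le_trans (abs_nonneg _) (hDle a b)
  -- per-entry bound
  have hmain : ∀ i j, |(S - Sstar) i j| ≤ 2 * E := by
    intro i j
    have hMij : ∀ a b, M a b = Sstar a b + D a b := by
      intro a b; rw [hM]; simp [Matrix.add_apply]
    rw [Matrix.sub_apply]
    rw [hS i j]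
    split_ifs with hcond
    · rw [hMij]
      simp only [add_sub_cancel_left]
      calc |D i j| ≤ E := hDle i j
      _ ≤ 2 * E := by linarith
    · rw [zero_sub, abs_neg]
      by_cases hz : Sstar i j = 0
      · rw [hz, abs_zero]; linarith
      rcases not_and_or.mp hcond with hcond | hcond
      · -- row threshold fails
        rw [not_le] at hcond
        have hfn : (fun j' => M i j') = fun j' => Sstar i j' + D i j' :=
          funext fun j' => hMij i j'
        rw [hfn, hMij i j] at hcond
        apply key_step (fun j' => Sstar i j') (fun j' => D i j') E (fun j' => hDle i j')
          ⌈2 * α * n₂⌉₊ _ hz hcond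
        · have h1 : (2 * ((Finset.univ.filter (fun j' => Sstar i j' ≠ 0)).card : ℝ))
              ≤ 2 * α * n₂ := by
            have := hrow i; linarith
          have h2 : (2 * α * n₂ : ℝ) ≤ (⌈2 * α * n₂⌉₊ : ℝ) := Nat.le_ceil _
          exact_mod_cast h1.trans h2
      · -- column threshold fails
        rw [not_le] at hcond
        have hfn : (fun i' => M i' j) = fun i' => Sstar i' j + D i' j :=
          funext fun i' => hMij i' j
        rw [hfn, hMij i j] at hcond
        apply key_step (fun i' => Sstar i' j) (fun i' => D i' j) E (fun i' => hDle i' j)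
          ⌈2 * α * n₁⌉₊ _ hz hcond
        · have h1 : (2 * ((Finset.univ.filter (fun i' => Sstar i' j ≠ 0)).card : ℝ))
              ≤ 2 * α * n₁ := by
            have := hcol j; linarith
          have h2 : (2 * α * n₁ : ℝ) ≤ (⌈2 * α * n₁⌉₊ : ℝ) := Nat.le_ceil _
          exact_mod_cast h1.trans h2
  -- conclude
  rw [entrywiseSup]
  refine Real.iSup_le (fun i => Real.iSup_le (fun j => hmain i j) (by linarith)) (by linarith)
end
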